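/- arXiv:2004.06830 — 3 statements merged into one kernel-verified Lean document; each statement's English description precedes it below -/
import Mathlib

section
/- Coupling of product measures via total variation: Let 𝒳 be a standard Borel space, let q₁, q₂ be probability measures on 𝒳, and let n ∈ ℕ. Then there exists a coupling π of the n-fold product measures q₁^{⊗n} and q₂^{⊗n} on 𝒳^n × 𝒳^n such that the expected Hamming distance satisfies ∫ ham(x,y) dπ(x,y) = n · d_TV(q₁, q₂). -/
open MeasureTheory ProbabilityTheory ENNReal
open Set

/-- Hamming distance between two datasets in `𝒳^n`. -/
noncomputable def ham {𝒳 : Type*} {n : ℕ} (x y : Fin n → 𝒳) : ℕ :=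
  letI : DecidableEq 𝒳 := Classical.decEq 𝒳
  (Finset.univ.filter fun i => x i ≠ y i).card

/-- Total variation distance: `sup_A (p(A) - q(A))` over measurable sets `A`. -/
noncomputable def tvDist {Ω : Type*} [MeasurableSpace Ω] (p q : Measure Ω) : ℝ :=
  ⨆ S : {S : Set Ω // MeasurableSet S}, ((p S).toReal - (q S).toReal)

theorem exists_maximal_coupling {𝒳 : Type*} [MeasurableSpace 𝒳]
    (q₁ q₂ : Measure 𝒳) [IsProbabilityMeasure q₁] [IsProbabilityMeasure q₂]
    (hD : MeasurableSet {p : 𝒳 × 𝒳 | p.1 ≠ p.2}) :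
    ∃ μ : Measure (𝒳 × 𝒳), IsProbabilityMeasure μ ∧ μ.map Prod.fst = q₁ ∧
      μ.map Prod.snd = q₂ ∧ μ {p : 𝒳 × 𝒳 | p.1 ≠ p.2} = ENNReal.ofReal (tvDist q₁ q₂) := by
  set D : Set (𝒳 × 𝒳) := {p | p.1 ≠ p.2} with hDdef
  set ρ : Measure 𝒳 := q₁ + q₂ with hρ
  have hac1 : q₁ ≪ ρ := Measure.absolutelyContinuous_of_le (Measure.le_add_right le_rfl)
  have hac2 : q₂ ≪ ρ := Measure.absolutelyContinuous_of_le (Measure.le_add_left le_rfl)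
  set f := q₁.rnDeriv ρ with hf
  set g := q₂.rnDeriv ρ with hg
  have hfm : Measurable f := Measure.measurable_rnDeriv _ _
  have hgm : Measurable g := Measure.measurable_rnDeriv _ _
  have hq1 : ρ.withDensity f = q₁ := Measure.withDensity_rnDeriv_eq q₁ ρ hac1
  have hq2 : ρ.withDensity g = q₂ := Measure.withDensity_rnDeriv_eq q₂ ρ hac2
  set S : Set 𝒳 := {x | g x ≤ f x} with hSdef
  have hS : MeasurableSet S := measurableSet_le hgm hfm
  set α : Measure 𝒳 := ρ.withDensity (S.indicator (fun x => f x - g x)) with hα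
  set β : Measure 𝒳 := ρ.withDensity (Sᶜ.indicator (fun x => g x - f x)) with hβ
  -- restrict identities
  have h1 : q₂.restrict S + α = q₁.restrict S := by
    rw [← hq1, ← hq2, restrict_withDensity hS, restrict_withDensity hS, hα,
      withDensity_indicator hS, ← withDensity_add_right (g := fun x => f x - g x) _ (hfm.sub hgm)]
    refine withDensity_congr_ae ?_
    filter_upwards [ae_restrict_mem hS] with x hx
    exact add_tsub_cancel_of_le hx
  have h2 : q₁.restrict Sᶜ + β = q₂.restrict Sᶜ := by
    rw [← hq1, ← hq2, restrict_withDensity hS.compl, restrict_withDensity hS.compl, hβ,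
      withDensity_indicator hS.compl, ← withDensity_add_right (g := fun x => g x - f x) _ (hgm.sub hfm)]
    refine withDensity_congr_ae ?_
    filter_upwards [ae_restrict_mem hS.compl] with x hx
    exact add_tsub_cancel_of_le (le_of_lt (lt_of_not_ge hx))
  set ν : Measure 𝒳 := q₂.restrict S + q₁.restrict Sᶜ with hν
  have hνα : ν + α = q₁ := by
    rw [hν, add_right_comm, h1, Measure.restrict_add_restrict_compl hS]
  have hνβ : ν + β = q₂ := by
    rw [hν, add_assoc, h2, Measure.restrict_add_restrict_compl hS]
  set ε : ℝ≥0∞ := α univ with hε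
  have hνuniv : ν univ + ε = 1 := by
    have := congrArg (fun m : Measure 𝒳 => m univ) hνα
    simpa using this
  have hνuniv' : ν univ + β univ = 1 := by
    have := congrArg (fun m : Measure 𝒳 => m univ) hνβ
    simpa using this
  have hνne : ν univ ≠ ∞ := by
    intro h
    rw [h] at hνuniv
    simp at hνuniv
  have hβε : β univ = ε := by
    have := hνuniv.trans hνuniv'.symm
    exact ((ENNReal.add_right_inj hνne).mp this).symm
  have hε1 : ε ≤ 1 := le_trans (by rw [← hνuniv]; exact le_add_self) le_rfl
  have hεne : ε ≠ ∞ := (lt_of_le_of_lt hε1 one_lt_top).ne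
  -- finite measure instances
  haveI : IsFiniteMeasure α := ⟨lt_of_le_of_lt hε1 one_lt_top⟩
  haveI : IsFiniteMeasure β := ⟨by rw [hβε]; exact lt_of_le_of_lt hε1 one_lt_top⟩
  -- supports
  have hαSc : α Sᶜ = 0 := by
    rw [hα, withDensity_apply _ hS.compl]
    rw [setLIntegral_congr_fun hS.compl (fun x hx => Set.indicator_of_notMem hx _)]
    simp
  have hβS : β S = 0 := by
    rw [hβ, withDensity_apply _ hS]
    rw [setLIntegral_congr_fun hS (fun x hx => Set.indicator_of_notMem (by simpa using hx) _)]
    simp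
  -- restrict comparisons
  have hres1 : ∀ A : Set 𝒳, MeasurableSet A → A ⊆ S → q₂ A ≤ q₁ A := by
    intro A hA hAS
    rw [← hq1, ← hq2, withDensity_apply _ hA, withDensity_apply _ hA]
    exact setLIntegral_mono hfm fun x hx => hAS hx
  have hres2 : ∀ A : Set 𝒳, MeasurableSet A → A ⊆ Sᶜ → q₁ A ≤ q₂ A := by
    intro A hA hAS
    rw [← hq1, ← hq2, withDensity_apply _ hA, withDensity_apply _ hA]
    exact setLIntegral_mono hgm fun x hx => le_of_lt (lt_of_not_ge (hAS hx))
  -- the key inequality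
  have key : ∀ A : Set 𝒳, MeasurableSet A → q₁ A + q₂ S ≤ q₁ S + q₂ A := by
    intro A hA
    have e1 : q₁ A = q₁ (A ∩ S) + q₁ (A \ S) := (measure_inter_add_diff A hS).symm
    have e2 : q₂ A = q₂ (A ∩ S) + q₂ (A \ S) := (measure_inter_add_diff A hS).symm
    have e3 : q₁ S = q₁ (S ∩ A) + q₁ (S \ A) := (measure_inter_add_diff S hA).symm
    have e4 : q₂ S = q₂ (S ∩ A) + q₂ (S \ A) := (measure_inter_add_diff S hA).symm
    rw [e1, e2, e3, e4, Set.inter_comm S A]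
    have i1 : q₁ (A \ S) ≤ q₂ (A \ S) :=
      hres2 _ (hA.diff hS) (Set.diff_subset_compl _ _)
    have i2 : q₂ (S \ A) ≤ q₁ (S \ A) :=
      hres1 _ (hS.diff hA) Set.diff_subset
    calc q₁ (A ∩ S) + q₁ (A \ S) + (q₂ (A ∩ S) + q₂ (S \ A))
        ≤ q₁ (A ∩ S) + q₂ (A \ S) + (q₂ (A ∩ S) + q₁ (S \ A)) := by
          gcongr
      _ = q₁ (A ∩ S) + q₁ (S \ A) + (q₂ (A ∩ S) + q₂ (A \ S)) := by ring
  -- ε = q₁ S - q₂ S via h1 at univ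
  have hεS : q₂ S + ε = q₁ S := by
    have := congrArg (fun m : Measure 𝒳 => m univ) h1
    simpa [Measure.restrict_apply_univ] using this
  -- tvDist computation
  have htReal : ∀ s : Set 𝒳, (q₁ s).toReal - (q₂ s).toReal ≤ (q₁ S).toReal - (q₂ S).toReal →
      True := fun _ _ => trivial
  have hbound : ∀ A : Set 𝒳, MeasurableSet A →
      (q₁ A).toReal - (q₂ A).toReal ≤ (q₁ S).toReal - (q₂ S).toReal := by
    intro A hA
    have h := key A hA
    have h' : (q₁ A).toReal + (q₂ S).toReal ≤ (q₁ S).toReal + (q₂ A).toReal := by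
      have := ENNReal.toReal_mono (by finiteness) h
      rwa [ENNReal.toReal_add (by finiteness) (by finiteness),
        ENNReal.toReal_add (by finiteness) (by finiteness)] at this
    linarith
  have htv : tvDist q₁ q₂ = (q₁ S).toReal - (q₂ S).toReal := by
    apply le_antisymm
    · exact ciSup_le fun A => hbound A.1 A.2
    · exact le_ciSup ⟨(q₁ S).toReal - (q₂ S).toReal, fun x ⟨A, hAx⟩ => hAx ▸ hbound A.1 A.2⟩
        (⟨S, hS⟩ : {S : Set 𝒳 // MeasurableSet S})
  have htvε : ENNReal.ofReal (tvDist q₁ q₂) = ε := by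
    rw [htv]
    have : (q₁ S).toReal - (q₂ S).toReal = ε.toReal := by
      have := congrArg ENNReal.toReal hεS
      rw [ENNReal.toReal_add (by finiteness) hεne] at this
      linarith
    rw [this, ENNReal.ofReal_toReal hεne]
  rcases eq_or_ne ε 0 with h0 | h0
  · have hα0 : α = 0 := Measure.measure_univ_eq_zero.mp (hε ▸ h0)
    have hβ0 : β = 0 := Measure.measure_univ_eq_zero.mp (by rw [hβε]; exact h0)
    have hνq1 : ν = q₁ := by rw [← hνα, hα0, add_zero]
    have hνq2 : ν = q₂ := by rw [← hνβ, hβ0, add_zero]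
    have hdiag : Measurable (fun x : 𝒳 => (x, x)) := measurable_id.prodMk measurable_id
    refine ⟨q₁.map (fun x => (x, x)), Measure.isProbabilityMeasure_map hdiag.aemeasurable, ?_, ?_, ?_⟩
    · rw [Measure.map_map measurable_fst hdiag]
      exact Measure.map_id
    · rw [Measure.map_map measurable_snd hdiag]
      rw [show (Prod.snd ∘ fun x : 𝒳 => (x, x)) = id from rfl, Measure.map_id,
        ← hνq1, hνq2]
    · rw [Measure.map_apply hdiag hD]
      have hpre : (fun x : 𝒳 => (x, x)) ⁻¹' D = ∅ := by ext x; simp [hDdef]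
      rw [hpre, measure_empty, htvε, h0]
  · set μ : Measure (𝒳 × 𝒳) := ν.map (fun x => (x, x)) + (ε⁻¹ • α.prod β) with hμ
    have hdiag : Measurable (fun x : 𝒳 => (x, x)) := measurable_id.prodMk measurable_id
    have hprod_fst : (α.prod β).map Prod.fst = ε • α := by
      rw [Measure.map_fst_prod, hβε]
    have hprod_snd : (α.prod β).map Prod.snd = ε • β := by
      rw [Measure.map_snd_prod, ← hε]
    have hfst : μ.map Prod.fst = q₁ := by
      rw [hμ, Measure.map_add _ _ measurable_fst, Measure.map_smul,
        Measure.map_map measurable_fst hdiag, hprod_fst, smul_smul,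
        ENNReal.inv_mul_cancel h0 hεne, one_smul,
        show (Prod.fst ∘ fun x : 𝒳 => (x, x)) = id from rfl, Measure.map_id, hνα]
    have hsnd : μ.map Prod.snd = q₂ := by
      rw [hμ, Measure.map_add _ _ measurable_snd, Measure.map_smul,
        Measure.map_map measurable_snd hdiag, hprod_snd, smul_smul,
        ENNReal.inv_mul_cancel h0 hεne, one_smul,
        show (Prod.snd ∘ fun x : 𝒳 => (x, x)) = id from rfl, Measure.map_id, hνβ]
    have hpuniv : α.prod β univ = ε * ε := by
      rw [← univ_prod_univ, Measure.prod_prod, ← hε, hβε]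
    have hμuniv : μ univ = 1 := by
      rw [hμ]
      simp only [Measure.add_apply, Measure.smul_apply, smul_eq_mul]
      rw [Measure.map_apply hdiag MeasurableSet.univ, preimage_univ, hpuniv, ← mul_assoc,
        ENNReal.inv_mul_cancel h0 hεne, one_mul]
      exact hνuniv
    refine ⟨μ, ⟨hμuniv⟩, hfst, hsnd, ?_⟩
    rw [htvε, hμ]
    simp only [Measure.add_apply, Measure.smul_apply, smul_eq_mul]
    rw [Measure.map_apply hdiag hD]
    have hpre : (fun x : 𝒳 => (x, x)) ⁻¹' D = ∅ := by ext x; simp [hDdef]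
    rw [hpre, measure_empty, zero_add]
    have hDc : α.prod β Dᶜ = 0 := by
      have hsub : Dᶜ ⊆ (Sᶜ ×ˢ univ) ∪ (univ ×ˢ S) := by
        rintro ⟨x, y⟩ hp
        have hxy : x = y := not_not.mp hp
        by_cases hx : x ∈ S
        · exact Or.inr ⟨trivial, hxy ▸ hx⟩
        · exact Or.inl ⟨hx, trivial⟩
      refine measure_mono_null hsub (measure_union_null ?_ ?_)
      · rw [Measure.prod_prod, hαSc, zero_mul]
      · rw [Measure.prod_prod, hβS, mul_zero]
    have hDfull : α.prod β D = ε * ε := by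
      have h := measure_add_measure_compl (μ := α.prod β) hD
      rw [hDc, add_zero] at h
      rw [h, hpuniv]
    rw [hDfull, ← mul_assoc, ENNReal.inv_mul_cancel h0 hεne, one_mul]


theorem pi_map_coord {γ δ : Type*} [MeasurableSpace γ] [MeasurableSpace δ] (n : ℕ)
    (μ : Measure γ) [IsProbabilityMeasure μ] {h : γ → δ} (hh : Measurable h) :
    (Measure.pi fun _ : Fin n => μ).map (fun g i => h (g i)) =
      Measure.pi (fun _ : Fin n => μ.map h) := by
  haveI : IsProbabilityMeasure (μ.map h) := Measure.isProbabilityMeasure_map hh.aemeasurable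
  refine (Measure.pi_eq (μ := fun _ : Fin n => μ.map h) fun s hs => ?_).symm
  have hm : Measurable fun (g : Fin n → γ) i => h (g i) :=
    measurable_pi_lambda _ fun i => hh.comp (measurable_pi_apply i)
  rw [Measure.map_apply hm (MeasurableSet.univ_pi hs)]
  have : (fun (g : Fin n → γ) i => h (g i)) ⁻¹' (univ.pi s) = univ.pi fun i => h ⁻¹' s i := by
    ext g; simp [Set.mem_pi]
  rw [this, Measure.pi_pi]
  exact Finset.prod_congr rfl fun i _ => (Measure.map_apply hh (hs i)).symm


/-- Coupling of product measures via total variation: for probability measures `q₁, q₂` on a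
standard Borel space `𝒳` and any `n`, there exists a coupling `π` of the `n`-fold products
`q₁^{⊗n}` and `q₂^{⊗n}` whose expected Hamming distance equals `n · d_TV(q₁, q₂)`. -/
theorem coupling_product_tv {𝒳 : Type*} [MeasurableSpace 𝒳] [StandardBorelSpace 𝒳]
    (q₁ q₂ : Measure 𝒳) [IsProbabilityMeasure q₁] [IsProbabilityMeasure q₂] (n : ℕ) :
    ∃ π : Measure ((Fin n → 𝒳) × (Fin n → 𝒳)), IsProbabilityMeasure π ∧
      π.map Prod.fst = Measure.pi (fun _ : Fin n => q₁) ∧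
      π.map Prod.snd = Measure.pi (fun _ : Fin n => q₂) ∧
      ∫⁻ z, (ham z.1 z.2 : ℝ≥0∞) ∂π = ENNReal.ofReal (n * tvDist q₁ q₂) := by
  -- measurability of the "not equal" set
  have hD : MeasurableSet {p : 𝒳 × 𝒳 | p.1 ≠ p.2} := by
    letI := upgradeStandardBorel 𝒳
    exact (isClosed_diagonal.measurableSet).compl
  obtain ⟨μ, hμprob, hμfst, hμsnd, hμD⟩ := exists_maximal_coupling q₁ q₂ hD
  set D : Set (𝒳 × 𝒳) := {p | p.1 ≠ p.2} with hDdef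
  set e := MeasurableEquiv.arrowProdEquivProdArrow 𝒳 𝒳 (Fin n) with he
  set π : Measure ((Fin n → 𝒳) × (Fin n → 𝒳)) :=
    (Measure.pi fun _ : Fin n => μ).map e with hπ
  haveI : IsProbabilityMeasure π := Measure.isProbabilityMeasure_map e.measurable.aemeasurable
  have hefst : (Prod.fst ∘ e) = fun (g : Fin n → 𝒳 × 𝒳) i => (g i).1 := rfl
  have hesnd : (Prod.snd ∘ e) = fun (g : Fin n → 𝒳 × 𝒳) i => (g i).2 := rfl
  refine ⟨π, inferInstance, ?_, ?_, ?_⟩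
  · rw [hπ, Measure.map_map measurable_fst e.measurable, hefst,
      pi_map_coord n μ measurable_fst, hμfst]
  · rw [hπ, Measure.map_map measurable_snd e.measurable, hesnd,
      pi_map_coord n μ measurable_snd, hμsnd]
  · -- integral computation
    have hham : ∀ x y : Fin n → 𝒳, ((ham x y : ℕ) : ℝ≥0∞) =
        ∑ i, D.indicator (1 : 𝒳 × 𝒳 → ℝ≥0∞) (x i, y i) := by
      intro x y
      rw [ham, Finset.card_filter]
      push_cast
      refine Finset.sum_congr rfl fun i _ => ?_
      by_cases h : x i = y i
      · simp [h, Set.indicator_apply, hDdef]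
      · simp [h, Set.indicator_apply, hDdef]
    have hmeas_term : ∀ i : Fin n, Measurable fun g : Fin n → 𝒳 × 𝒳 =>
        D.indicator (1 : 𝒳 × 𝒳 → ℝ≥0∞) (g i) :=
      fun i => (measurable_one.indicator hD).comp (measurable_pi_apply i)
    have hφmeas : Measurable fun z : (Fin n → 𝒳) × (Fin n → 𝒳) => ((ham z.1 z.2 : ℕ) : ℝ≥0∞) := by
      have : (fun z : (Fin n → 𝒳) × (Fin n → 𝒳) => ((ham z.1 z.2 : ℕ) : ℝ≥0∞)) =
          fun z => ∑ i, D.indicator (1 : 𝒳 × 𝒳 → ℝ≥0∞) (z.1 i, z.2 i) := by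
        funext z; exact hham z.1 z.2
      rw [this]
      refine Finset.measurable_sum _ fun i _ => ?_
      exact (measurable_one.indicator hD).comp
        (((measurable_pi_apply i).comp measurable_fst).prodMk
          ((measurable_pi_apply i).comp measurable_snd))
    rw [hπ, lintegral_map hφmeas e.measurable]
    have heval : ∀ g : Fin n → 𝒳 × 𝒳, ((ham (e g).1 (e g).2 : ℕ) : ℝ≥0∞) =
        ∑ i, D.indicator (1 : 𝒳 × 𝒳 → ℝ≥0∞) (g i) := by
      intro g
      rw [hham]
      exact Finset.sum_congr rfl fun i _ => rfl
    calc ∫⁻ g, ((ham (e g).1 (e g).2 : ℕ) : ℝ≥0∞) ∂(Measure.pi fun _ : Fin n => μ)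
        = ∫⁻ g, ∑ i, D.indicator (1 : 𝒳 × 𝒳 → ℝ≥0∞) (g i) ∂(Measure.pi fun _ : Fin n => μ) := by
          exact lintegral_congr heval
      _ = ∑ i, ∫⁻ g, D.indicator (1 : 𝒳 × 𝒳 → ℝ≥0∞) (g i) ∂(Measure.pi fun _ : Fin n => μ) :=
          lintegral_finset_sum _ fun i _ => hmeas_term i
      _ = ∑ _i : Fin n, μ D := by
          refine Finset.sum_congr rfl fun i _ => ?_
          have hrw : (fun g : Fin n → 𝒳 × 𝒳 => D.indicator (1 : 𝒳 × 𝒳 → ℝ≥0∞) (g i)) =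
              (Function.eval i ⁻¹' D).indicator (1 : (Fin n → 𝒳 × 𝒳) → ℝ≥0∞) := by
            funext g
            by_cases hg : g i ∈ D
            · simp [Set.indicator_of_mem, hg, Set.mem_preimage, Function.eval]
            · simp [Set.indicator_of_notMem, hg, Set.mem_preimage, Function.eval]
          rw [hrw, lintegral_indicator_one (hD.preimage (measurable_pi_apply i))]
          rw [Set.eval_preimage, Measure.pi_pi]
          rw [Finset.prod_eq_single_of_mem i (Finset.mem_univ i)
            (fun j _ hj => by simp [Function.update_of_ne hj])]
          simp
      _ = ENNReal.ofReal (n * tvDist q₁ q₂) := by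
          rw [Finset.sum_const, Finset.card_univ, Fintype.card_fin, hμD, nsmul_eq_mul,
            ENNReal.ofReal_mul (by positivity : (0:ℝ) ≤ (n:ℝ)), ENNReal.ofReal_natCast]
end

section
/- Gilbert–Varshamov bound for constant-weight binary codes: Let l and k be integers with 20 ≤ l ≤ k/2. Then there exists a set 𝒞 of binary vectors of length k (elements of {0,1}^k), each of constant weight l (exactly l coordinates equal to 1), such that any two distinct codewords in 𝒞 have Hamming distance at least l/4, and |𝒞| ≥ (k/(2^{7/8}·l))^{7l/8}. -/
open Finset

namespace GVaux

set_option maxHeartbeats 1000000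



lemma exp_neg_two_le {x : ℝ} (h0 : 0 ≤ x) (h2 : x ≤ 1/2) : Real.exp (-(2*x)) ≤ 1 - x := by
  have h1 : (0:ℝ) < 1 + 2*x := by linarith
  have h := Real.add_one_le_exp (2*x)
  have hinv : Real.exp (-(2*x)) ≤ (1 + 2*x)⁻¹ := by
    rw [Real.exp_neg]
    exact inv_anti₀ h1 (by linarith)
  refine hinv.trans ?_
  rw [inv_le_iff_one_le_mul₀ h1]
  nlinarith

lemma exp_neg_87_le {p : ℝ} (h0 : 0 ≤ p) (h8 : p ≤ 1/8) : Real.exp (-(8/7*p)) ≤ 1 - p := by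
  have h1 : (0:ℝ) < 1 + 8/7*p := by linarith
  have h := Real.add_one_le_exp (8/7*p)
  have hinv : Real.exp (-(8/7*p)) ≤ (1 + 8/7*p)⁻¹ := by
    rw [Real.exp_neg]
    exact inv_anti₀ h1 (by linarith)
  refine hinv.trans ?_
  rw [inv_le_iff_one_le_mul₀ h1]
  nlinarith

/-- binomial tail bound: `C(m,t) p^t (1-p)^(m-t) ≤ 1`. -/
lemma choose_mul_le_one (m t : ℕ) (p : ℝ) (hp0 : 0 < p) (hp1 : p < 1) (htm : t ≤ m) :
    (m.choose t : ℝ) * (p ^ t * (1 - p) ^ (m - t)) ≤ 1 := by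
  have h1p : (0:ℝ) < 1 - p := by linarith
  have hsum : ∑ j ∈ Finset.range (m+1), p^j*(1-p)^(m-j)*(m.choose j:ℝ) = 1 := by
    rw [← add_pow]; norm_num
  have hle := Finset.single_le_sum (f := fun j => p ^ j * (1-p) ^ (m - j) * (m.choose j : ℝ))
    (fun i _ => by positivity) (Finset.mem_range_succ_iff.mpr htm)
  calc (m.choose t : ℝ) * (p ^ t * (1 - p) ^ (m - t))
      = p ^ t * (1-p) ^ (m - t) * (m.choose t : ℝ) := by ring
    _ ≤ ∑ j ∈ Finset.range (m+1), p^j*(1-p)^(m-j)*(m.choose j:ℝ) := hle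
    _ = 1 := hsum

/-- the U-lemma -/
lemma U_lemma {u : ℝ} (h0 : 0 < u) (h1 : u ≤ 1) :
    (2:ℝ)^8 * Real.exp (-32) ≤ (1+u)^8 * Real.exp (-(64*u/(1+u))) := by
  have hu1 : (0:ℝ) < 1 + u := by linarith
  set w : ℝ := (1-u)/(1+u) with hw
  have hw0 : 0 ≤ w := div_nonneg (by linarith) (by linarith)
  have hw1 : (1+u) * (1+w) = 2 := by rw [hw]; field_simp; norm_num
  have hexp : -(64*u/(1+u)) = 32*w - 32 := by
    rw [hw]; field_simp; ring
  have h4 : (1+w)^8 ≤ Real.exp (32*w) := by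
    have hW : 1 + w ≤ Real.exp (4*w) := by
      have := Real.add_one_le_exp w
      have h2 : Real.exp w ≤ Real.exp (4*w) := by
        apply Real.exp_le_exp.mpr; linarith
      linarith
    calc (1+w)^8 ≤ (Real.exp (4*w))^8 := by
          apply pow_le_pow_left₀ (by linarith) hW
      _ = Real.exp (32*w) := by
          rw [← Real.exp_nat_mul]; congr 1; push_cast; ring
  have key : (2:ℝ)^8 ≤ (1+u)^8 * Real.exp (32*w) := by
    calc (2:ℝ)^8 = ((1+u)*(1+w))^8 := by rw [hw1]
      _ = (1+u)^8*(1+w)^8 := mul_pow _ _ _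
      _ ≤ (1+u)^8 * Real.exp (32*w) := by
          exact mul_le_mul_of_nonneg_left h4 (by positivity)
  calc (2:ℝ)^8 * Real.exp (-32) ≤ ((1+u)^8 * Real.exp (32*w)) * Real.exp (-32) := by
        exact mul_le_mul_of_nonneg_right key (le_of_lt (Real.exp_pos _))
    _ = (1+u)^8 * Real.exp (-(64*u/(1+u))) := by
        rw [hexp, Real.exp_sub, Real.exp_neg 32]; ring

/-- polynomial vs exponential -/
lemma poly_le_exp (l : ℕ) (hl : 20 ≤ l) : (l:ℕ)^128 ≤ 2^(29*l) := by
  induction l, hl using Nat.le_induction with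
  | base => rw [show 29*20 = 145*4 by norm_num, pow_mul]; norm_num
  | succ n hn ih =>
    have h1 : 20*(n+1) ≤ 21*n := by omega
    have h2 : 20^128 * (n+1)^128 ≤ 21^128 * n^128 := by
      calc 20^128 * (n+1)^128 = (20*(n+1))^128 := by rw [mul_pow]
        _ ≤ (21*n)^128 := Nat.pow_le_pow_left h1 _
        _ = 21^128 * n^128 := by rw [mul_pow]
    have h3 : (21:ℕ)^128 ≤ 2^29 * 20^128 := by norm_num
    have h6 : 20^128 * (n+1)^128 ≤ 20^128 * 2^(29*(n+1)) := by
      calc 20^128*(n+1)^128 ≤ 21^128 * n^128 := h2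
        _ ≤ (2^29*20^128) * 2^(29*n) := Nat.mul_le_mul h3 ih
        _ = 20^128 * 2^(29*(n+1)) := by
            rw [show 29*(n+1) = 29*n+29 by ring, pow_add]; ring
    exact Nat.le_of_mul_le_mul_left h6 (by positivity)



/-- lower bound for descending factorial -/
lemma descFactorial_lower (l k : ℕ) (hl : 1 ≤ l) (hlk : 2*l ≤ k) :
    (k:ℝ)^l * Real.exp (-((l:ℝ)^2/k)) ≤ (k.descFactorial l : ℝ) := by
  have hk0 : (0:ℝ) < k := by
    have : (1:ℕ) ≤ k := by omega
    exact_mod_cast Nat.lt_of_lt_of_le Nat.zero_lt_one this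
  have hcast : (k.descFactorial l : ℝ) = ∏ i ∈ Finset.range l, ((k:ℝ) - i) := by
    rw [Nat.descFactorial_eq_prod_range, Nat.cast_prod]
    refine Finset.prod_congr rfl fun i hi => ?_
    rw [Finset.mem_range] at hi
    have : i ≤ k := by omega
    exact Nat.cast_sub this
  rw [hcast]
  have step : ∀ i ∈ Finset.range l, (k:ℝ) * Real.exp (-(2*((i:ℝ)/k))) ≤ (k:ℝ) - i := by
    intro i hi
    rw [Finset.mem_range] at hi
    have hx0 : (0:ℝ) ≤ (i:ℝ)/k := by positivity
    have hx2 : (i:ℝ)/k ≤ 1/2 := by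
      rw [div_le_iff₀ hk0]
      have : (2*i : ℕ) ≤ k := by omega
      have := (Nat.cast_le (α := ℝ)).mpr this
      push_cast at this ⊢
      linarith
    have := exp_neg_two_le hx0 hx2
    calc (k:ℝ) * Real.exp (-(2*((i:ℝ)/k))) ≤ (k:ℝ) * (1 - (i:ℝ)/k) :=
          mul_le_mul_of_nonneg_left this (le_of_lt hk0)
      _ = (k:ℝ) - i := by field_simp
  calc (k:ℝ)^l * Real.exp (-((l:ℝ)^2/k))
      ≤ ∏ i ∈ Finset.range l, ((k:ℝ) * Real.exp (-(2*((i:ℝ)/k)))) := by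
        rw [Finset.prod_mul_distrib, Finset.prod_const, ← Real.exp_sum, Finset.card_range]
        apply mul_le_mul_of_nonneg_left _ (by positivity)
        apply Real.exp_le_exp.mpr
        have hS : (∑ i ∈ Finset.range l, (i:ℝ)) * 2 = (l:ℝ) * ((l:ℝ) - 1) := by
          have h := Finset.sum_range_id_mul_two l
          have h2 := congrArg (Nat.cast : ℕ → ℝ) h
          push_cast [Nat.cast_sub hl] at h2
          convert h2 using 2 <;> push_cast <;> ring
        have hsum : ∑ i ∈ Finset.range l, (-(2*((i:ℝ)/k))) = -((l:ℝ)*((l:ℝ)-1)/k) := by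
          have : ∀ i ∈ Finset.range l, (-(2*((i:ℝ)/k))) = (i:ℝ) * (-2/k) := by
            intro i _; field_simp
          rw [Finset.sum_congr rfl this, ← Finset.sum_mul]
          rw [show (∑ i ∈ Finset.range l, (i:ℝ)) = (l:ℝ)*((l:ℝ)-1)/2 by linarith [hS]]
          field_simp
        rw [hsum]
        have hll : (l:ℝ)*((l:ℝ)-1) ≤ (l:ℝ)^2 := by nlinarith [Nat.cast_nonneg (α := ℝ) l]
        have : (l:ℝ)*((l:ℝ)-1)/k ≤ (l:ℝ)^2/k := by gcongr
        linarith
    _ ≤ ∏ i ∈ Finset.range l, ((k:ℝ) - i) := by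
        apply Finset.prod_le_prod _ step
        intro i _; positivity



/-- factorial upper bound `l! ≤ l^(l+1) e^(1-l)` in the form `l! * e^(l-1) ≤ l^(l+1)` -/
lemma factorial_upper (l : ℕ) (hl : 1 ≤ l) :
    (l.factorial : ℝ) * Real.exp ((l:ℝ) - 1) ≤ (l:ℝ)^(l+1) := by
  induction l, hl using Nat.le_induction with
  | base => simp
  | succ n hn ih =>
    have hn0 : (0:ℝ) < n := by exact_mod_cast hn.trans_lt' (by norm_num)
    have hexp : Real.exp (1/((n:ℝ)+1)) ≤ ((n:ℝ)+1)/n := by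
      have hx : (1:ℝ)/((n:ℝ)+1) < 1 := by
        rw [div_lt_one (by positivity)]; linarith
      have h1 := Real.add_one_le_exp (-(1/((n:ℝ)+1)))
      have h2 : (0:ℝ) < 1 - 1/((n:ℝ)+1) := by linarith
      have h3 : Real.exp (1/((n:ℝ)+1)) ≤ 1/(1 - 1/((n:ℝ)+1)) := by
        rw [le_div_iff₀ h2]
        have he := Real.exp_neg (1/((n:ℝ)+1))
        have hp := Real.exp_pos (1/((n:ℝ)+1))
        rw [he] at h1
        have h4 : (1 - 1/((n:ℝ)+1)) ≤ (Real.exp (1/((n:ℝ)+1)))⁻¹ := by linarith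
        calc Real.exp (1/((n:ℝ)+1)) * (1 - 1/((n:ℝ)+1))
            ≤ Real.exp (1/((n:ℝ)+1)) * (Real.exp (1/((n:ℝ)+1)))⁻¹ :=
              mul_le_mul_of_nonneg_left h4 hp.le
          _ = 1 := mul_inv_cancel₀ (ne_of_gt hp)
      refine h3.trans ?_
      rw [div_le_div_iff₀ (by linarith) hn0]
      field_simp
      linarith
    have hkey : Real.exp 1 * (n:ℝ)^(n+1) ≤ ((n:ℝ)+1)^(n+1) := by
      have h4 : Real.exp 1 = (Real.exp (1/((n:ℝ)+1)))^(n+1) := by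
        rw [← Real.exp_nat_mul]; congr 1; field_simp; norm_cast
      have h5 : (Real.exp (1/((n:ℝ)+1)))^(n+1) * (n:ℝ)^(n+1) ≤ (((n:ℝ)+1)/n)^(n+1) * (n:ℝ)^(n+1) := by
        apply mul_le_mul_of_nonneg_right _ (by positivity)
        exact pow_le_pow_left₀ (by positivity) hexp _
      have h6 : (((n:ℝ)+1)/n)^(n+1) * (n:ℝ)^(n+1) = ((n:ℝ)+1)^(n+1) := by
        rw [div_pow, div_mul_cancel₀]
        positivity
      rw [h4]; rw [h6] at h5; exact h5
    have hcast : ((n+1).factorial : ℝ) = ((n:ℝ)+1) * n.factorial := by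
      rw [Nat.factorial_succ]; push_cast; ring
    have hexp2 : Real.exp ((n:ℝ)+1-1) = Real.exp ((n:ℝ)-1) * Real.exp 1 := by
      rw [← Real.exp_add]; ring_nf
    push_cast
    calc ((n+1).factorial : ℝ) * Real.exp (((n:ℕ):ℝ)+1-1)
        = ((n:ℝ)+1) * ((n.factorial:ℝ) * Real.exp ((n:ℝ)-1)) * Real.exp 1 := by
          rw [hcast, hexp2]; ring
      _ ≤ ((n:ℝ)+1) * (n:ℝ)^(n+1) * Real.exp 1 := by
          apply mul_le_mul_of_nonneg_right _ (le_of_lt (Real.exp_pos 1))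
          exact mul_le_mul_of_nonneg_left ih (by positivity)
      _ = ((n:ℝ)+1) * (Real.exp 1 * (n:ℝ)^(n+1)) := by ring
      _ ≤ ((n:ℝ)+1) * ((n:ℝ)+1)^(n+1) := mul_le_mul_of_nonneg_left hkey (by positivity)
      _ = ((n:ℝ)+1)^(n+1+1) := by ring
    



/-- Cl bound : `C(l,t0) * 7^(l-t0) ≤ 8^l` -/
lemma Cl_bound (l t0 : ℕ) (h : t0 ≤ l) :
    (l.choose t0 : ℝ) * 7 ^ (l - t0) ≤ 8 ^ l := by
  have h8 : (0:ℝ) < 8 ^ l := by positivity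
  have key := choose_mul_le_one l t0 (1/8) (by norm_num) (by norm_num) h
  have hid : ((1:ℝ)/8) ^ t0 * (1 - 1/8) ^ (l - t0) = 7 ^ (l - t0) / 8 ^ l := by
    have : (1:ℝ) - 1/8 = 7/8 := by norm_num
    rw [this, div_pow, div_pow, div_mul_div_comm, one_pow]
    rw [one_mul, ← pow_add, Nat.add_sub_cancel' h]
  rw [hid] at key
  calc (l.choose t0 : ℝ) * 7 ^ (l - t0) = ((l.choose t0 : ℝ) * (7 ^ (l - t0) / 8 ^ l)) * 8 ^ l := by
        field_simp
    _ ≤ 1 * 8 ^ l := mul_le_mul_of_nonneg_right key h8.le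
    _ = 8 ^ l := one_mul _

/-- Cn bound : `C(n,t0) * l^t0 ≤ (8n)^t0 * exp(l/7)` -/
lemma Cn_bound (n l t0 : ℕ) (hl : 1 ≤ l) (hln : l ≤ n) (ht : t0 ≤ n) :
    (n.choose t0 : ℝ) * (l:ℝ) ^ t0 ≤ ((8*n : ℝ)) ^ t0 * Real.exp ((l:ℝ)/7) := by
  have hn0 : (0:ℝ) < n := by exact_mod_cast Nat.lt_of_lt_of_le hl hln
  have hl0 : (0:ℝ) < l := by exact_mod_cast hl
  set p : ℝ := (l:ℝ)/(8*n) with hp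
  have hp0 : 0 < p := by positivity
  have hp8 : p ≤ 1/8 := by
    rw [hp, div_le_div_iff₀ (by positivity) (by norm_num)]
    have : (l:ℝ) ≤ n := by exact_mod_cast hln
    linarith
  have hp1 : p < 1 := lt_of_le_of_lt hp8 (by norm_num)
  have key := choose_mul_le_one n t0 p hp0 hp1 ht
  -- (1-p)^(n-t0) ≥ exp(-(l/7))
  have hexp : Real.exp (-((l:ℝ)/7)) ≤ (1-p) ^ (n - t0) := by
    have h1 : Real.exp (-(8/7*p)) ≤ 1 - p := exp_neg_87_le hp0.le hp8
    have h2 : (Real.exp (-(8/7*p))) ^ (n - t0) ≤ (1-p) ^ (n - t0) :=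
      pow_le_pow_left₀ (Real.exp_pos _).le h1 _
    refine le_trans ?_ h2
    rw [← Real.exp_nat_mul]
    apply Real.exp_le_exp.mpr
    have hnt : ((n - t0 : ℕ):ℝ) ≤ (n:ℝ) := by
      exact_mod_cast Nat.cast_le.mpr (Nat.sub_le n t0)
    have hpn : p * (n:ℝ) = (l:ℝ)/8 := by
      rw [hp]; field_simp
    have : ((n - t0 : ℕ):ℝ) * (8/7*p) ≤ (n:ℝ) * (8/7*p) := by
      apply mul_le_mul_of_nonneg_right hnt (by positivity)
    have heq : (n:ℝ) * (8/7*p) = (l:ℝ)/7 := by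
      rw [show (n:ℝ) * (8/7*p) = 8/7*(p*(n:ℝ)) by ring, hpn]; ring
    nlinarith
  -- combine
  have hCp : (n.choose t0 : ℝ) * p ^ t0 ≤ Real.exp ((l:ℝ)/7) := by
    have hpos : (0:ℝ) < Real.exp (-((l:ℝ)/7)) := Real.exp_pos _
    have h3 : ((n.choose t0 : ℝ) * p ^ t0) * Real.exp (-((l:ℝ)/7))
        ≤ ((n.choose t0 : ℝ) * p ^ t0) * (1-p) ^ (n - t0) := by
      apply mul_le_mul_of_nonneg_left hexp (by positivity)
    have h4 : ((n.choose t0 : ℝ) * p ^ t0) * (1-p) ^ (n - t0) ≤ 1 := by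
      calc ((n.choose t0 : ℝ) * p ^ t0) * (1-p) ^ (n - t0)
          = (n.choose t0 : ℝ) * (p ^ t0 * (1-p) ^ (n - t0)) := by ring
        _ ≤ 1 := key
    have h5 : ((n.choose t0 : ℝ) * p ^ t0) * Real.exp (-((l:ℝ)/7)) ≤ 1 := h3.trans h4
    have hEE : Real.exp ((l:ℝ)/7) = (Real.exp (-((l:ℝ)/7)))⁻¹ := by
      rw [← Real.exp_neg]; ring_nf
    rw [hEE]
    calc (n.choose t0 : ℝ) * p ^ t0
        = (((n.choose t0 : ℝ) * p ^ t0) * Real.exp (-((l:ℝ)/7))) * (Real.exp (-((l:ℝ)/7)))⁻¹ := by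
          field_simp
      _ ≤ 1 * (Real.exp (-((l:ℝ)/7)))⁻¹ := by
          apply mul_le_mul_of_nonneg_right h5 (by positivity)
      _ = (Real.exp (-((l:ℝ)/7)))⁻¹ := one_mul _
  have hfin : (l:ℝ) ^ t0 = p ^ t0 * (8*(n:ℝ)) ^ t0 := by
    rw [← mul_pow, hp]; congr 1; field_simp
  calc (n.choose t0 : ℝ) * (l:ℝ) ^ t0
      = ((n.choose t0 : ℝ) * p ^ t0) * (8*(n:ℝ)) ^ t0 := by rw [hfin]; ring
    _ ≤ Real.exp ((l:ℝ)/7) * (8*(n:ℝ)) ^ t0 := by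
        apply mul_le_mul_of_nonneg_right hCp (by positivity)
    _ = ((8*(n:ℝ))) ^ t0 * Real.exp ((l:ℝ)/7) := by ring



lemma master (l k : ℕ) (hl : 20 ≤ l) (hlk : 2*l ≤ k) :
    ((((l-1)/8 + 1 : ℕ) : ℝ) * ((l.choose ((l-1)/8)) : ℝ) * (((k-l).choose ((l-1)/8)) : ℝ))
      * (((k:ℝ) / ((2:ℝ) ^ ((7:ℝ)/8) * (l:ℝ))) ^ ((7 * (l:ℝ))/8)) ≤ (k.choose l : ℝ) := by
  set t0 : ℕ := (l-1)/8 with ht0def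
  set n : ℕ := k - l with hndef
  have h8t : 8 * t0 ≤ l - 1 := by
    rw [ht0def, mul_comm]; exact Nat.div_mul_le_self (l-1) 8
  have htl : t0 ≤ l := by omega
  have h4t : 4 * (t0 + 1) ≤ l := by omega
  have hln : l ≤ n := by omega
  have hkn : k = n + l := by omega
  have htn : t0 ≤ n := le_trans htl hln
  have hlk' : l ≤ k := by omega
  set K : ℝ := (k:ℝ) with hKdef
  set L : ℝ := (l:ℝ) with hLdef
  set N : ℝ := (n:ℝ) with hNdef
  set T : ℝ := (t0:ℝ) with hTdef
  have hK : (0:ℝ) < K := by rw [hKdef]; exact_mod_cast Nat.lt_of_lt_of_le (by omega) hlk'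
  have hL : (0:ℝ) < L := by rw [hLdef]; exact_mod_cast (by omega : 0 < l)
  have hN : (0:ℝ) < N := by rw [hNdef]; exact_mod_cast (by omega : 0 < n)
  have hT0 : (0:ℝ) ≤ T := by rw [hTdef]; positivity
  have hL20 : (20:ℝ) ≤ L := by rw [hLdef]; exact_mod_cast hl
  have hLN : L ≤ N := by rw [hLdef, hNdef]; exact_mod_cast hln
  have hKNL : K = N + L := by rw [hKdef, hNdef, hLdef]; exact_mod_cast hkn
  have h2r : (0:ℝ) < (2:ℝ) ^ ((7:ℝ)/8) := Real.rpow_pos_of_pos two_pos _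
  have hbase : (0:ℝ) < K / ((2:ℝ) ^ ((7:ℝ)/8) * L) := div_pos hK (mul_pos h2r hL)
  have hT1 : (0:ℝ) < ((t0 + 1 : ℕ) : ℝ) := by positivity
  have hCl : (0:ℝ) < (l.choose t0 : ℝ) := by exact_mod_cast Nat.choose_pos htl
  have hCn : (0:ℝ) < (n.choose t0 : ℝ) := by exact_mod_cast Nat.choose_pos htn
  have hKC : (0:ℝ) < (k.choose l : ℝ) := by exact_mod_cast Nat.choose_pos hlk'
  have hM : (0:ℝ) < (K / ((2:ℝ) ^ ((7:ℝ)/8) * L)) ^ ((7 * L)/8) := Real.rpow_pos_of_pos hbase _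
  set lam2 : ℝ := Real.log 2 with hlam2
  set lam7 : ℝ := Real.log 7 with hlam7
  -- log of M
  have hlogM : Real.log ((K / ((2:ℝ) ^ ((7:ℝ)/8) * L)) ^ ((7 * L)/8))
      = (7*L/8) * (Real.log K - ((7/8)*lam2 + Real.log L)) := by
    rw [Real.log_rpow hbase, Real.log_div (ne_of_gt hK) (ne_of_gt (mul_pos h2r hL)),
      Real.log_mul (ne_of_gt h2r) (ne_of_gt hL), Real.log_rpow two_pos]
  -- g1
  have g1 : (l:ℝ)*Real.log K - L^2/K + (L - 1) - (L+1)*Real.log L ≤ Real.log (k.choose l : ℝ) := by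
    have hdesc := descFactorial_lower l k (by omega) hlk
    have hfac := factorial_upper l (by omega)
    have hdpos : (0:ℝ) < (k.descFactorial l : ℝ) := by
      rw [Nat.descFactorial_eq_factorial_mul_choose]
      exact_mod_cast Nat.mul_pos l.factorial_pos (Nat.choose_pos hlk')
    have hfpos : (0:ℝ) < (l.factorial : ℝ) := by exact_mod_cast l.factorial_pos
    have hld : Real.log ((k:ℝ)^l * Real.exp (-(L^2/K))) ≤ Real.log (k.descFactorial l : ℝ) :=
      Real.log_le_log (by positivity) (by rw [hLdef, hKdef] at *; exact hdesc)
    rw [Real.log_mul (by positivity) (by positivity), Real.log_pow, Real.log_exp] at hld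
    have hlf : Real.log (l.factorial : ℝ) + (L - 1) ≤ ((l:ℕ)+1 : ℝ)*Real.log L := by
      have h1 : Real.log ((l.factorial:ℝ) * Real.exp (L-1)) ≤ Real.log ((L:ℝ)^(l+1)) :=
        Real.log_le_log (by positivity) (by rw [hLdef] at *; exact hfac)
      rw [Real.log_mul (ne_of_gt hfpos) (by positivity), Real.log_exp, Real.log_pow] at h1
      push_cast at h1 ⊢
      linarith
    have hsplit : Real.log (k.descFactorial l : ℝ)
        = Real.log (l.factorial : ℝ) + Real.log (k.choose l : ℝ) := by
      rw [← Real.log_mul (ne_of_gt hfpos) (ne_of_gt hKC)]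
      congr 1
      rw [← Nat.cast_mul]
      exact_mod_cast congrArg (Nat.cast : ℕ → ℝ) (Nat.descFactorial_eq_factorial_mul_choose k l)
    push_cast at hlf
    rw [hsplit] at hld
    push_cast
    linarith
  -- g2
  have g2 : Real.log (l.choose t0 : ℝ) + (L - T)*lam7 ≤ 3*L*lam2 := by
    have h1 : Real.log ((l.choose t0 : ℝ) * 7 ^ (l - t0)) ≤ Real.log ((8:ℝ) ^ l) :=
      Real.log_le_log (by positivity) (Cl_bound l t0 htl)
    rw [Real.log_mul (ne_of_gt hCl) (by positivity), Real.log_pow, Real.log_pow] at h1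
    have hcast : ((l - t0 : ℕ) : ℝ) = L - T := by
      rw [hLdef, hTdef]; exact Nat.cast_sub htl
    have h8 : Real.log (8:ℝ) = 3*lam2 := by
      rw [hlam2, show (8:ℝ) = 2^3 by norm_num, Real.log_pow]; push_cast; ring
    rw [h8, hcast] at h1
    push_cast at h1
    linarith
  -- g3
  have g3 : Real.log (n.choose t0 : ℝ) + T*Real.log L ≤ T*(3*lam2 + Real.log N) + L/7 := by
    have h1 : Real.log ((n.choose t0 : ℝ) * (l:ℝ) ^ t0)
        ≤ Real.log (((8*(n:ℝ))) ^ t0 * Real.exp ((l:ℝ)/7)) :=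
      Real.log_le_log (by positivity) (Cn_bound n l t0 (by omega) hln htn)
    rw [Real.log_mul (ne_of_gt hCn) (by positivity),
      Real.log_mul (by positivity) (by positivity), Real.log_pow, Real.log_pow,
      Real.log_exp, Real.log_mul (by norm_num) (ne_of_gt hN)] at h1
    have h8 : Real.log (8:ℝ) = 3*lam2 := by
      rw [hlam2, show (8:ℝ) = 2^3 by norm_num, Real.log_pow]; push_cast; ring
    rw [h8] at h1
    push_cast at h1
    linarith
  -- g4
  have g4 : Real.log ((t0 + 1 : ℕ) : ℝ) ≤ Real.log L - 2*lam2 := by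
    have hc : 4*(T+1) ≤ L := by
      rw [hTdef, hLdef]; exact_mod_cast h4t
    have h1 : Real.log (4*(T+1)) ≤ Real.log L := Real.log_le_log (by positivity) hc
    rw [Real.log_mul (by norm_num) (by positivity)] at h1
    have h4 : Real.log (4:ℝ) = 2*lam2 := by
      rw [hlam2, show (4:ℝ) = 2^2 by norm_num, Real.log_pow]; push_cast; try ring
    have hTT : ((t0 + 1 : ℕ) : ℝ) = T + 1 := by rw [hTdef]; push_cast; ring
    rw [hTT]
    linarith
  -- g5
  have g5 : (L/8)*Real.log K - (L/8)*Real.log N - L^2/K ≥ (L/8)*lam2 - L/2 := by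
    set u : ℝ := L/N with hu
    have h0u : 0 < u := by positivity
    have h1u : u ≤ 1 := by rw [hu, div_le_one hN]; exact hLN
    have hU := U_lemma h0u h1u
    have h1pu : (0:ℝ) < 1 + u := by linarith
    have hKN : 1 + u = K/N := by rw [hu, hKNL]; field_simp
    have huu : u/(1+u) = L/K := by
      rw [hu, hKNL]; field_simp
    have hlog1 : Real.log ((2:ℝ)^8 * Real.exp (-32)) = 8*lam2 - 32 := by
      rw [Real.log_mul (by positivity) (by positivity), Real.log_pow, Real.log_exp, hlam2]
      push_cast
      try ring
    have hlog2 : Real.log ((1+u)^8 * Real.exp (-(64*u/(1+u))))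
        = 8*(Real.log K - Real.log N) - 64*(L/K) := by
      rw [Real.log_mul (by positivity) (by positivity), Real.log_pow, Real.log_exp]
      rw [show 64*u/(1+u) = 64*(u/(1+u)) by ring, huu, hKN,
        Real.log_div (ne_of_gt hK) (ne_of_gt hN)]
      push_cast; ring
    have hle : Real.log ((2:ℝ)^8 * Real.exp (-32))
        ≤ Real.log ((1+u)^8 * Real.exp (-(64*u/(1+u)))) :=
      Real.log_le_log (by positivity) hU
    rw [hlog1, hlog2] at hle
    have hQ : L^2/K = L*(L/K) := by ring
    have hmul := mul_le_mul_of_nonneg_left hle (show (0:ℝ) ≤ L/8 by positivity)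
    rw [ge_iff_le, hQ]
    linarith [hmul]
  -- g7
  have g7 : 128*Real.log L ≤ 29*L*lam2 := by
    have h1 : ((l:ℕ)^128 : ℝ) ≤ ((2:ℕ)^(29*l) : ℝ) := by exact_mod_cast poly_le_exp l hl
    push_cast at h1
    have h2 : Real.log (L^128) ≤ Real.log ((2:ℝ)^(29*l)) :=
      Real.log_le_log (by positivity) (by rw [hLdef]; exact_mod_cast h1)
    rw [Real.log_pow, Real.log_pow] at h2
    rw [hlam2, hLdef]
    push_cast at h2 ⊢
    linarith
  -- g8
  have g8 : 157*lam2 ≤ 56*lam7 := by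
    have h1 : ((2:ℝ))^(157:ℕ) ≤ 7^(56:ℕ) := by norm_num
    have h2 : Real.log ((2:ℝ)^(157:ℕ)) ≤ Real.log ((7:ℝ)^(56:ℕ)) :=
      Real.log_le_log (by positivity) h1
    rw [Real.log_pow, Real.log_pow] at h2
    rw [hlam2, hlam7]
    push_cast at h2
    linarith
  -- numeric log 2 bounds
  have hl2u : lam2 < 0.6931471808 := Real.log_two_lt_d9
  have hl2l : (0.6931471803:ℝ) < lam2 := Real.log_two_gt_d9
  have hlam7pos : 0 ≤ lam7 := Real.log_nonneg (by norm_num)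
  -- product certificates
  have hT8 : T ≤ (L-1)/8 := by
    have : (8*t0 : ℝ) ≤ ((l - 1 : ℕ) : ℝ) := by exact_mod_cast h8t
    have hc : ((l - 1 : ℕ) : ℝ) = L - 1 := by
      rw [hLdef]; exact_mod_cast Nat.cast_sub (by omega : 1 ≤ l)
    rw [hc] at this
    rw [hTdef] at *
    linarith
  have hlogLN : Real.log L ≤ Real.log N := Real.log_le_log hL hLN
  have c2 : 0 ≤ (L/8 - T)*(Real.log N - Real.log L) :=
    mul_nonneg (by linarith) (by linarith)
  have c3 : 0 ≤ (L/8 - T)*lam7 := mul_nonneg (by linarith) hlam7pos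
  have c4 : (L/64)*(157*lam2) ≤ (L/64)*(56*lam7) :=
    mul_le_mul_of_nonneg_left g8 (by positivity)
  have c1 : 0 ≤ ((L-1)/8 - T)*lam2 := mul_nonneg (by linarith) (by linarith)
  -- residual numeric
  have hres : (1:ℝ) - (19/8)*lam2 ≤ (5/14 - (31/64)*lam2) * L := by
    have hcoef : (1/50:ℝ) ≤ 5/14 - (31/64)*lam2 := by linarith
    have h20 : (1/50:ℝ)*20 ≤ (5/14 - (31/64)*lam2) * L :=
      mul_le_mul hcoef hL20 (by norm_num) (by linarith)
    linarith
  -- final assembly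
  have hlogLHS : Real.log (((((t0+1 : ℕ)):ℝ) * (l.choose t0 : ℝ) * ((n.choose t0) : ℝ))
      * ((K / ((2:ℝ) ^ ((7:ℝ)/8) * L)) ^ ((7 * L)/8)))
      = Real.log ((t0+1 : ℕ) : ℝ) + Real.log (l.choose t0 : ℝ) + Real.log (n.choose t0 : ℝ)
        + (7*L/8) * (Real.log K - ((7/8)*lam2 + Real.log L)) := by
    rw [Real.log_mul (by positivity) (ne_of_gt hM),
      Real.log_mul (by positivity) (ne_of_gt hCn),
      Real.log_mul (ne_of_gt hT1) (ne_of_gt hCl), hlogM]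
  have hfinal : Real.log (((((t0+1 : ℕ)):ℝ) * (l.choose t0 : ℝ) * ((n.choose t0) : ℝ))
      * ((K / ((2:ℝ) ^ ((7:ℝ)/8) * L)) ^ ((7 * L)/8))) ≤ Real.log (k.choose l : ℝ) := by
    rw [hlogLHS]
    push_cast at g1
    linarith [g1, g2, g3, g4, g5, g7, c1, c2, c3, c4, hres]
  have hLHSpos : (0:ℝ) < ((((t0+1 : ℕ)):ℝ) * (l.choose t0 : ℝ) * ((n.choose t0) : ℝ))
      * ((K / ((2:ℝ) ^ ((7:ℝ)/8) * L)) ^ ((7 * L)/8)) := by positivity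
  calc ((((t0+1 : ℕ)):ℝ) * (l.choose t0 : ℝ) * ((n.choose t0) : ℝ))
      * ((K / ((2:ℝ) ^ ((7:ℝ)/8) * L)) ^ ((7 * L)/8))
      = Real.exp (Real.log (((((t0+1 : ℕ)):ℝ) * (l.choose t0 : ℝ) * ((n.choose t0) : ℝ))
        * ((K / ((2:ℝ) ^ ((7:ℝ)/8) * L)) ^ ((7 * L)/8)))) := (Real.exp_log hLHSpos).symm
    _ ≤ Real.exp (Real.log (k.choose l : ℝ)) := Real.exp_le_exp.mpr hfinal
    _ = (k.choose l : ℝ) := Real.exp_log hKC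



variable {k : ℕ}

/-- support of a boolean vector -/
def supp (c : Fin k → Bool) : Finset (Fin k) := Finset.univ.filter fun i => c i = true

lemma supp_inj {c c' : Fin k → Bool} (h : supp c = supp c') : c = c' := by
  funext i
  have h1 : i ∈ supp c ↔ i ∈ supp c' := by rw [h]
  simp only [supp, Finset.mem_filter, Finset.mem_univ, true_and] at h1
  cases hc : c i <;> cases hc' : c' i <;> simp [hc, hc'] at h1 ⊢ <;> tauto

lemma hamming_eq_card (c s : Fin k → Bool) :
    hammingDist c s = (supp c \ supp s).card + (supp s \ supp c).card := by
  rw [← Finset.card_union_of_disjoint disjoint_sdiff_sdiff]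
  unfold hammingDist
  congr 1
  ext i
  simp only [supp, Finset.mem_union, Finset.mem_sdiff, Finset.mem_filter, Finset.mem_univ,
    true_and]
  cases hc : c i <;> cases hs : s i <;> simp [hc, hs]

lemma card_sdiff_eq {c s : Fin k → Bool} (hc : (supp c).card = (supp s).card) :
    (supp c \ supp s).card = (supp s \ supp c).card := by
  have h1 := Finset.card_inter_add_card_sdiff (supp c) (supp s)
  have h2 := Finset.card_inter_add_card_sdiff (supp s) (supp c)
  rw [Finset.inter_comm] at h2
  omega

/-- the number of weight-l vectors is `C(k,l)` -/
lemma card_S (l : ℕ) :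
    (Finset.univ.filter fun c : Fin k → Bool => (supp c).card = l).card = k.choose l := by
  classical
  have hpc : (Finset.powersetCard l (Finset.univ : Finset (Fin k))).card = k.choose l := by
    rw [Finset.card_powersetCard, Finset.card_univ, Fintype.card_fin]
  rw [← hpc]
  refine Finset.card_bij (fun c _ => supp c) ?_ ?_ ?_
  · intro c hc
    simp only [Finset.mem_filter] at hc
    rw [Finset.mem_powersetCard]
    exact ⟨Finset.subset_univ _, hc.2⟩
  · intro a ha b hb hab
    exact supp_inj hab
  · intro P hP
    rw [Finset.mem_powersetCard] at hP
    refine ⟨fun i => decide (i ∈ P), ?_, ?_⟩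
    · simp only [Finset.mem_filter, Finset.mem_univ, true_and]
      have : supp (fun i => decide (i ∈ P)) = P := by
        ext i; simp [supp]
      rw [this]; exact hP.2
    · ext i; simp [supp]

lemma choose_mono_below (m r s : ℕ) (hrs : r ≤ s) (hs : s ≤ m/2) :
    m.choose r ≤ m.choose s := by
  induction hrs using Nat.decreasingInduction with
  | self => exact le_refl _
  | of_succ j hj ih =>
    exact le_trans (Nat.choose_le_succ_of_lt_half_left (lt_of_lt_of_le hj hs)) ih

/-- ball counting bound -/
lemma ball_card_le (l : ℕ) (hl : 1 ≤ l) (hlk : 2*l ≤ k) (c : Fin k → Bool)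
    (hc : (supp c).card = l) :
    (Finset.univ.filter fun s : Fin k → Bool =>
        (supp s).card = l ∧ 4 * hammingDist c s ≤ l - 1).card
      ≤ ((l-1)/8 + 1) * ((k-l).choose ((l-1)/8) * l.choose ((l-1)/8)) := by
  classical
  set t0 : ℕ := (l-1)/8 with ht0def
  set B := Finset.univ.filter fun s : Fin k → Bool =>
      (supp s).card = l ∧ 4 * hammingDist c s ≤ l - 1 with hBdef
  set T := (Finset.range (t0+1)).biUnion
      (fun t => (Finset.univ \ supp c).powersetCard t ×ˢ (supp c).powersetCard t) with hTdef
  have hcardsupp : ∀ s ∈ B, (supp s \ supp c).card = (supp c \ supp s).card ∧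
      (supp s \ supp c).card ≤ t0 := by
    intro s hs
    rw [hBdef, Finset.mem_filter] at hs
    obtain ⟨-, hsl, hdist⟩ := hs
    have heq : (supp c \ supp s).card = (supp s \ supp c).card :=
      card_sdiff_eq (by rw [hc, hsl])
    have hd := hamming_eq_card c s
    constructor
    · omega
    · rw [ht0def, Nat.le_div_iff_mul_le (by norm_num)]
      omega
  have hinj : ∀ s₁ ∈ B, ∀ s₂ ∈ B,
      (supp s₁ \ supp c, supp c \ supp s₁) = (supp s₂ \ supp c, supp c \ supp s₂) → s₁ = s₂ := by
    intro s₁ _ s₂ _ hpair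
    rw [Prod.mk.injEq] at hpair
    obtain ⟨hA, hB2⟩ := hpair
    apply supp_inj
    have hsplit : ∀ s : Fin k → Bool,
        supp s = (supp c \ (supp c \ supp s)) ∪ (supp s \ supp c) := by
      intro s
      ext i
      simp only [Finset.mem_union, Finset.mem_sdiff]
      by_cases h1 : i ∈ supp c <;> by_cases h2 : i ∈ supp s <;> tauto
    rw [hsplit s₁, hsplit s₂, hA, hB2]
  have hsub : B.card ≤ T.card := by
    apply Finset.card_le_card_of_injOn (fun s => (supp s \ supp c, supp c \ supp s))
    · intro s hs
      obtain ⟨heq, hle⟩ := hcardsupp s hs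
      rw [hTdef]
      simp only [Finset.mem_coe]
      rw [Finset.mem_biUnion]
      refine ⟨(supp s \ supp c).card, Finset.mem_range_succ_iff.mpr hle, ?_⟩
      rw [Finset.mem_product]
      constructor
      · rw [Finset.mem_powersetCard]
        exact ⟨Finset.sdiff_subset_sdiff (Finset.subset_univ _) (le_refl _), rfl⟩
      · rw [Finset.mem_powersetCard]
        exact ⟨Finset.sdiff_subset, heq.symm⟩
    · intro s₁ h₁ s₂ h₂ h
      exact hinj s₁ h₁ s₂ h₂ h
  have hTcard : T.card ≤ (t0 + 1) * ((k-l).choose t0 * l.choose t0) := by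
    rw [hTdef]
    refine le_trans (Finset.card_biUnion_le) ?_
    have hterm : ∀ t ∈ Finset.range (t0+1),
        ((Finset.univ \ supp c).powersetCard t ×ˢ (supp c).powersetCard t).card
          ≤ (k-l).choose t0 * l.choose t0 := by
      intro t ht
      rw [Finset.mem_range] at ht
      have htt0 : t ≤ t0 := by omega
      rw [Finset.card_product, Finset.card_powersetCard, Finset.card_powersetCard]
      have hcompl : (Finset.univ \ supp c).card = k - l := by
        rw [Finset.card_sdiff_of_subset (Finset.subset_univ _), Finset.card_univ, Fintype.card_fin, hc]
      rw [hcompl, hc]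
      have h1 : t0 ≤ l/2 := by omega
      have h2 : t0 ≤ (k-l)/2 := by
        refine le_trans h1 (Nat.div_le_div_right ?_)
        omega
      exact Nat.mul_le_mul (choose_mono_below _ t t0 htt0 h2) (choose_mono_below _ t t0 htt0 h1)
    refine le_trans (Finset.sum_le_sum hterm) ?_
    rw [Finset.sum_const, Finset.card_range, smul_eq_mul]
  exact le_trans hsub hTcard


end GVaux

open GVaux in
set_option maxHeartbeats 1000000 in
/-- Gilbert–Varshamov bound for constant-weight binary codes: for integers `20 ≤ l ≤ k/2`
there exists a binary code `𝒞 ⊆ {0,1}^k` (bits encoded by `Bool`) of constant weight `l`,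
minimum Hamming distance at least `l/4`, and size at least `(k/(2^{7/8} l))^{7l/8}`. -/
theorem gilbert_varshamov_constant_weight (l k : ℕ) (hl : 20 ≤ l) (hlk : 2 * l ≤ k) :
    ∃ 𝒞 : Finset (Fin k → Bool),
      (∀ c ∈ 𝒞, (Finset.univ.filter fun i => c i = true).card = l) ∧
      (∀ c ∈ 𝒞, ∀ c' ∈ 𝒞, c ≠ c' → (l : ℝ) / 4 ≤ (hammingDist c c' : ℝ)) ∧
      ((k : ℝ) / ((2 : ℝ) ^ ((7 : ℝ) / 8) * l)) ^ ((7 * (l : ℝ)) / 8) ≤ (𝒞.card : ℝ) := by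
  classical
  set S : Finset (Fin k → Bool) := Finset.univ.filter fun c => (supp c).card = l with hSdef
  set good : Finset (Fin k → Bool) → Prop := fun 𝒟 => 𝒟 ⊆ S ∧
      ∀ c ∈ 𝒟, ∀ c' ∈ 𝒟, c ≠ c' → l ≤ 4 * hammingDist c c' with hgood
  obtain ⟨𝒞, h𝒞, hmax⟩ : ∃ 𝒞, good 𝒞 ∧ ∀ 𝒟, good 𝒟 → 𝒟.card ≤ 𝒞.card := by
    obtain ⟨𝒞, h1, h2⟩ := Finset.exists_max_image
      (Finset.univ.filter fun 𝒟 => good 𝒟) Finset.card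
      ⟨∅, Finset.mem_filter.mpr ⟨Finset.mem_univ _,
        ⟨Finset.empty_subset _, fun c hc => absurd hc (Finset.notMem_empty c)⟩⟩⟩
    exact ⟨𝒞, (Finset.mem_filter.mp h1).2,
      fun 𝒟 h => h2 𝒟 (Finset.mem_filter.mpr ⟨Finset.mem_univ _, h⟩)⟩
  -- covering property
  have hcover : ∀ s ∈ S, ∃ c ∈ 𝒞, 4 * hammingDist c s ≤ l - 1 := by
    intro s hs
    by_contra hno
    push_neg at hno
    have hfar : ∀ c ∈ 𝒞, l ≤ 4 * hammingDist c s := by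
      intro c hc
      have := hno c hc
      omega
    have hsnotin : s ∉ 𝒞 := by
      intro hsin
      have := hfar s hsin
      rw [hammingDist_self] at this
      omega
    have hgood' : good (insert s 𝒞) := by
      constructor
      · rw [Finset.insert_subset_iff]
        exact ⟨hs, h𝒞.1⟩
      · intro c hc c' hc' hne
        rw [Finset.mem_insert] at hc hc'
        rcases hc with rfl | hc <;> rcases hc' with rfl | hc'
        · exact absurd rfl hne
        · rw [hammingDist_comm]
          exact hfar c' hc'
        · exact hfar c hc
        · exact h𝒞.2 c hc c' hc' hne
    have hcard : 𝒞.card + 1 ≤ 𝒞.card := by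
      have h1 := hmax (insert s 𝒞) hgood'
      rw [Finset.card_insert_of_notMem hsnotin] at h1
      omega
    omega
  -- counting
  set t0 : ℕ := (l-1)/8 with ht0def
  set Bn : ℕ := (t0 + 1) * ((k-l).choose t0 * l.choose t0) with hBndef
  have hcount : k.choose l ≤ 𝒞.card * Bn := by
    have hSsub : S ⊆ 𝒞.biUnion (fun c => S.filter fun s => 4 * hammingDist c s ≤ l - 1) := by
      intro s hs
      obtain ⟨c, hc, hd⟩ := hcover s hs
      exact Finset.mem_biUnion.mpr ⟨c, hc, Finset.mem_filter.mpr ⟨hs, hd⟩⟩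
    have hball : ∀ c ∈ 𝒞, (S.filter fun s => 4 * hammingDist c s ≤ l - 1).card ≤ Bn := by
      intro c hc
      have hcS := h𝒞.1 hc
      rw [hSdef, Finset.mem_filter] at hcS
      have heq : (S.filter fun s => 4 * hammingDist c s ≤ l - 1)
          = Finset.univ.filter fun s : Fin k → Bool =>
              (supp s).card = l ∧ 4 * hammingDist c s ≤ l - 1 := by
        rw [hSdef, Finset.filter_filter]
      rw [heq, hBndef, ht0def]
      exact ball_card_le l (by omega) hlk c hcS.2
    calc k.choose l = S.card := (card_S l).symm
      _ ≤ (𝒞.biUnion (fun c => S.filter fun s => 4 * hammingDist c s ≤ l - 1)).card :=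
          Finset.card_le_card hSsub
      _ ≤ ∑ c ∈ 𝒞, (S.filter fun s => 4 * hammingDist c s ≤ l - 1).card :=
          Finset.card_biUnion_le
      _ ≤ ∑ _c ∈ 𝒞, Bn := Finset.sum_le_sum hball
      _ = 𝒞.card * Bn := by rw [Finset.sum_const, smul_eq_mul]
  -- conclude size bound
  have hBnpos : (0:ℝ) < (Bn:ℝ) := by
    rw [hBndef]
    have h1 : 0 < (k-l).choose t0 := Nat.choose_pos (by omega)
    have h2 : 0 < l.choose t0 := Nat.choose_pos (by omega)
    have h3 : 0 < (t0+1) * ((k-l).choose t0 * l.choose t0) := by positivity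
    exact_mod_cast h3
  have hMsize : ((k : ℝ) / ((2 : ℝ) ^ ((7 : ℝ) / 8) * l)) ^ ((7 * (l : ℝ)) / 8) ≤ (𝒞.card : ℝ) := by
    have hm := master l k hl hlk
    have hc : ((k.choose l : ℕ) : ℝ) ≤ (𝒞.card : ℝ) * (Bn:ℝ) := by
      exact_mod_cast hcount
    set M : ℝ := ((k : ℝ) / ((2 : ℝ) ^ ((7 : ℝ) / 8) * l)) ^ ((7 * (l : ℝ)) / 8) with hMdef
    have hMB : M * (Bn:ℝ) ≤ (𝒞.card : ℝ) * (Bn:ℝ) := by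
      refine le_trans ?_ hc
      refine le_trans (le_of_eq ?_) hm
      rw [hBndef, ht0def, hMdef]
      push_cast
      ring
    exact le_of_mul_le_mul_right hMB hBnpos
  -- final
  refine ⟨𝒞, ?_, ?_, hMsize⟩
  · intro c hc
    have hcS := h𝒞.1 hc
    rw [hSdef, Finset.mem_filter] at hcS
    exact hcS.2
  · intro c hc c' hc' hne
    have := h𝒞.2 c hc c' hc' hne
    rw [div_le_iff₀ (by norm_num : (0:ℝ) < 4)]
    calc (l:ℝ) ≤ ((4 * hammingDist c c' : ℕ) : ℝ) := by exact_mod_cast this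
      _ = (hammingDist c c' : ℝ) * 4 := by push_cast; ring
end

section
/- Sample complexity lower bound for ε-DP k-ary distribution estimation under total variation distance: There exists a universal constant c > 0 such that for every integer k ≥ 40, every α with 0 < α < 1/48, every ε > 0, and every n: if there exists an ε-differentially private Markov kernel θ̂ from ([k])^n to Δ_k such that for every p ∈ Δ_k, E_{X∼p^{⊗n}} E_{Q∼θ̂(X)}[d_TV(Q, p)] ≤ α, then n ≥ c·(k/α² + k/(αε)). -/
open MeasureTheory ProbabilityTheory ENNReal

/-- `(ε, δ)`-differential privacy for a kernel from `𝒳^n` to `Θ`. -/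
def IsDP {𝒳 Θ : Type*} [MeasurableSpace 𝒳] [MeasurableSpace Θ] {n : ℕ}
    (M : Kernel (Fin n → 𝒳) Θ) (ε δ : ℝ) : Prop :=
  ∀ x y : Fin n → 𝒳, ham x y ≤ 1 → ∀ S : Set Θ, MeasurableSet S →
    M x S ≤ ENNReal.ofReal (Real.exp ε) * M y S + ENNReal.ofReal δ

/-- The simplex `Δ_k` of probability vectors on `[k]`. -/
def simplex (k : ℕ) : Type := {p : Fin k → ℝ // p ∈ stdSimplex ℝ (Fin k)}

noncomputable instance (k : ℕ) : MeasurableSpace (simplex k) :=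
  Subtype.instMeasurableSpace

/-- The probability measure on `Fin k` associated to a probability vector. -/
noncomputable def discMeasure {k : ℕ} (p : Fin k → ℝ) : Measure (Fin k) :=
  ∑ i, ENNReal.ofReal (p i) • Measure.dirac i

/-- `n` i.i.d. samples from the distribution with probability vector `p`. -/
noncomputable def iidSamples {k : ℕ} (n : ℕ) (p : Fin k → ℝ) : Measure (Fin n → Fin k) :=
  Measure.pi fun _ : Fin n => discMeasure p

/-- Total variation distance between `k`-ary probability vectors:
`(1/2) Σ_x |p(x) − q(x)|`. -/
noncomputable def tvVec {k : ℕ} (p q : Fin k → ℝ) : ℝ := (∑ x, |p x - q x|) / 2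

/-- `ℓ₂` distance between `k`-ary probability vectors. -/
noncomputable def l2Vec {k : ℕ} (p q : Fin k → ℝ) : ℝ := Real.sqrt (∑ x, (p x - q x) ^ 2)

namespace KLB


variable {k n : ℕ}

/-- sign of a boolean -/
noncomputable def bsign (b : Bool) : ℝ := if b then 1 else -1

lemma bsign_abs (b : Bool) : |bsign b| = 1 := by cases b <;> simp [bsign]

/-- first index of pair `j` -/
def i0 (j : Fin (k/2)) : Fin k := ⟨2*j.val, by have := j.2; omega⟩
/-- second index of pair `j` -/
def i1 (j : Fin (k/2)) : Fin k := ⟨2*j.val+1, by have := j.2; omega⟩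

lemma i0_ne_i1 (j j' : Fin (k/2)) : i0 j ≠ i1 j' := by
  simp only [i0, i1, ne_eq, Fin.mk.injEq]; omega

lemma i0_inj : Function.Injective (i0 (k := k)) := by
  intro a b h; simp only [i0, Fin.mk.injEq] at h; exact Fin.ext (by omega)

lemma i1_inj : Function.Injective (i1 (k := k)) := by
  intro a b h; simp only [i1, Fin.mk.injEq] at h; exact Fin.ext (by omega)

/-- embedding of pairs into `Fin k` -/
def emb (jb : Fin (k/2) × Bool) : Fin k := if jb.2 then i1 jb.1 else i0 jb.1

lemma emb_inj : Function.Injective (emb (k := k)) := by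
  rintro ⟨j, b⟩ ⟨j', b'⟩ h
  have hv : (emb (j, b)).val = (emb (j', b')).val := congrArg Fin.val h
  cases b <;> cases b' <;> simp [emb, i0, i1] at hv
  · simp [Prod.ext_iff, Fin.ext_iff, hv]
  · exact absurd hv (by omega)
  · exact absurd hv (by omega)
  · simp [Prod.ext_iff, Fin.ext_iff, hv]

lemma mem_image_emb_iff (i : Fin k) :
    i ∈ Finset.image emb Finset.univ ↔ i.val / 2 < k / 2 := by
  constructor
  · intro h
    obtain ⟨⟨j, b⟩, _, rfl⟩ := Finset.mem_image.1 h
    have := j.2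
    cases b <;> simp only [emb, i0, i1, if_true, if_false, Bool.false_eq_true] <;> simp <;> omega
  · intro h
    refine Finset.mem_image.2 ⟨⟨⟨i.val/2, h⟩, decide (i.val % 2 = 1)⟩, Finset.mem_univ _, ?_⟩
    rcases Nat.even_or_odd i.val with he | ho
    · have : i.val % 2 = 0 := Nat.even_iff.1 he
      simp [emb, this, i0]; exact Fin.ext (by simp; omega)
    · have : i.val % 2 = 1 := Nat.odd_iff.1 ho
      simp [emb, this, i1]; exact Fin.ext (by simp; omega)

lemma sum_pairs (f : Fin k → ℝ) :
    ∑ jb : Fin (k/2) × Bool, f (emb jb) = ∑ j : Fin (k/2), (f (i0 j) + f (i1 j)) := by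
  rw [Fintype.sum_prod_type]
  refine Finset.sum_congr rfl fun j _ => ?_
  rw [Fintype.sum_bool]
  simp [emb, add_comm]

lemma sum_image_pairs (f : Fin k → ℝ) :
    ∑ i ∈ Finset.image emb Finset.univ, f i = ∑ j : Fin (k/2), (f (i0 j) + f (i1 j)) := by
  rw [Finset.sum_image (fun a _ b _ h => emb_inj h)]
  exact sum_pairs f

/-- sum over pairs is at most sum over everything, for nonneg `f` -/
lemma sum_pairs_le (f : Fin k → ℝ) (hf : ∀ i, 0 ≤ f i) :
    ∑ j : Fin (k/2), (f (i0 j) + f (i1 j)) ≤ ∑ i, f i := by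
  rw [← sum_image_pairs]
  exact Finset.sum_le_sum_of_subset_of_nonneg (Finset.subset_univ _)
    (fun i _ _ => hf i)

/-- sum of a function supported on the pairs -/
lemma sum_eq_sum_pairs (f : Fin k → ℝ) (hf : ∀ i : Fin k, ¬ (i.val / 2 < k / 2) → f i = 0) :
    ∑ i, f i = ∑ j : Fin (k/2), (f (i0 j) + f (i1 j)) := by
  rw [← sum_image_pairs]
  refine (Finset.sum_subset (Finset.subset_univ _) fun i _ hi => ?_).symm
  exact hf i (fun h => hi ((mem_image_emb_iff i).2 h))


/-- perturbation -/
noncomputable def eps (δ : ℝ) (u : Fin (k/2) → Bool) (i : Fin k) : ℝ :=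
  if h : i.val / 2 < k / 2 then
    (if i.val % 2 = 0 then 1 else -1) * bsign (u ⟨i.val / 2, h⟩) * δ
  else 0

/-- the perturbed probability vector -/
noncomputable def pvec (δ : ℝ) (u : Fin (k/2) → Bool) (i : Fin k) : ℝ :=
  (1 + eps δ u i) / k

/-- flip coordinate `j` -/
def flip (u : Fin (k/2) → Bool) (j : Fin (k/2)) : Fin (k/2) → Bool :=
  Function.update u j (!u j)

lemma eps_i0 (δ : ℝ) (u : Fin (k/2) → Bool) (j : Fin (k/2)) :
    eps δ u (i0 j) = bsign (u j) * δ := by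
  have h2 : (2 * j.val) / 2 = j.val := by omega
  have hlt : (i0 j : Fin k).val / 2 < k / 2 := by simpa [i0, h2] using j.2
  rw [eps, dif_pos hlt]
  have : (⟨(i0 j : Fin k).val / 2, hlt⟩ : Fin (k/2)) = j := Fin.ext (by simp [i0, h2])
  rw [this]
  simp [i0, Nat.mul_mod_right]

lemma eps_i1 (δ : ℝ) (u : Fin (k/2) → Bool) (j : Fin (k/2)) :
    eps δ u (i1 j) = -(bsign (u j) * δ) := by
  have h2 : (2 * j.val + 1) / 2 = j.val := by omega
  have hlt : (i1 j : Fin k).val / 2 < k / 2 := by simpa [i1, h2] using j.2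
  rw [eps, dif_pos hlt]
  have : (⟨(i1 j : Fin k).val / 2, hlt⟩ : Fin (k/2)) = j := Fin.ext (by simp [i1, h2])
  rw [this]
  have : (2 * j.val + 1) % 2 = 1 := by omega
  simp only [i1, this]
  simp

lemma abs_eps_le (δ : ℝ) (hδ : 0 ≤ δ) (u : Fin (k/2) → Bool) (i : Fin k) :
    |eps δ u i| ≤ δ := by
  rw [eps]
  split
  · rw [abs_mul, abs_mul, bsign_abs, abs_of_nonneg hδ]
    split <;> simp
  · simpa using hδ

lemma eps_flip_eq (δ : ℝ) (u : Fin (k/2) → Bool) (j : Fin (k/2)) (i : Fin k)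
    (h0 : i ≠ i0 j) (h1 : i ≠ i1 j) : eps δ (flip u j) i = eps δ u i := by
  rw [eps, eps]
  split
  · rename_i h
    have hne : (⟨i.val / 2, h⟩ : Fin (k/2)) ≠ j := by
      intro he
      have : i.val / 2 = j.val := congrArg Fin.val he
      rcases Nat.even_or_odd i.val with he' | ho
      · exact h0 (Fin.ext (by have := Nat.even_iff.1 he'; simp [i0]; omega))
      · exact h1 (Fin.ext (by have := Nat.odd_iff.1 ho; simp [i1]; omega))
    rw [flip, Function.update_of_ne hne]
  · rfl

lemma pvec_pos (δ : ℝ) (hδ0 : 0 ≤ δ) (hδ1 : δ < 1) (hk : 0 < k)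
    (u : Fin (k/2) → Bool) (i : Fin k) : 0 < pvec δ u i := by
  have := abs_eps_le δ hδ0 u i
  have : -δ ≤ eps δ u i := (abs_le.1 this).1
  have hnum : 0 < 1 + eps δ u i := by linarith
  exact div_pos hnum (by positivity)

lemma sum_eps (δ : ℝ) (u : Fin (k/2) → Bool) : ∑ i, eps δ u i = 0 := by
  rw [sum_eq_sum_pairs (eps δ u) (fun i hi => by rw [eps, dif_neg hi])]
  refine Finset.sum_eq_zero fun j _ => ?_
  rw [eps_i0, eps_i1]; ring

lemma sum_pvec (δ : ℝ) (hk : 0 < k) (u : Fin (k/2) → Bool) :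
    ∑ i, pvec δ u i = 1 := by
  unfold pvec
  rw [← Finset.sum_div, Finset.sum_add_distrib, sum_eps]
  have hk' : (k : ℝ) ≠ 0 := Nat.cast_ne_zero.2 hk.ne'
  simp
  simp [hk.ne']

lemma pvec_mem (δ : ℝ) (hδ0 : 0 ≤ δ) (hδ1 : δ < 1) (hk : 0 < k) (u : Fin (k/2) → Bool) :
    pvec δ u ∈ stdSimplex ℝ (Fin k) :=
  ⟨fun i => (pvec_pos δ hδ0 hδ1 hk u i).le, sum_pvec δ hk u⟩

lemma pvec_flip_eq (δ : ℝ) (u : Fin (k/2) → Bool) (j : Fin (k/2)) (i : Fin k)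
    (h0 : i ≠ i0 j) (h1 : i ≠ i1 j) : pvec δ (flip u j) i = pvec δ u i := by
  rw [pvec, pvec, eps_flip_eq δ u j i h0 h1]

lemma flip_apply (u : Fin (k/2) → Bool) (j : Fin (k/2)) : flip u j j = !u j := by
  simp [flip]

lemma flip_flip (u : Fin (k/2) → Bool) (j : Fin (k/2)) : flip (flip u j) j = u := by
  funext j'
  by_cases h : j' = j
  · subst h; simp [flip]
  · simp [flip, Function.update_of_ne h]

lemma bsign_not (b : Bool) : bsign (!b) = -bsign b := by cases b <;> simp [bsign]

lemma pvec_i0 (δ : ℝ) (u : Fin (k/2) → Bool) (j : Fin (k/2)) :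
    pvec δ u (i0 j) = (1 + bsign (u j) * δ) / k := by rw [pvec, eps_i0]

lemma pvec_i1 (δ : ℝ) (u : Fin (k/2) → Bool) (j : Fin (k/2)) :
    pvec δ u (i1 j) = (1 - bsign (u j) * δ) / k := by rw [pvec, eps_i1]; ring_nf


lemma pair_mem_filter {j : Fin (k/2)} : i0 j ≠ i1 j := i0_ne_i1 j j

lemma sum_support_pair (f : Fin k → ℝ) (j : Fin (k/2))
    (hf : ∀ i, i ≠ i0 j → i ≠ i1 j → f i = 0) :
    ∑ i, f i = f (i0 j) + f (i1 j) := by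
  rw [show f (i0 j) + f (i1 j) = ∑ i ∈ ({i0 j, i1 j} : Finset (Fin k)), f i by
    rw [Finset.sum_pair pair_mem_filter]]
  refine (Finset.sum_subset (Finset.subset_univ _) fun i _ hi => ?_).symm
  simp only [Finset.mem_insert, Finset.mem_singleton, not_or] at hi
  exact hf i hi.1 hi.2

lemma tv_sum (δ : ℝ) (hδ : 0 ≤ δ) (hk : 0 < k) (u : Fin (k/2) → Bool) (j : Fin (k/2)) :
    ∑ i, |pvec δ u i - pvec δ (flip u j) i| ≤ 4 * δ / k := by
  have hk' : (0:ℝ) < k := by positivity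
  rw [sum_support_pair _ j (fun i h0 h1 => by rw [pvec_flip_eq δ u j i h0 h1]; simp)]
  set s := bsign (u j) with hs
  have e0 : pvec δ u (i0 j) - pvec δ (flip u j) (i0 j) = 2*(s*δ)/k := by
    rw [pvec_i0, pvec_i0, flip_apply, bsign_not, ← hs]; ring
  have e1 : pvec δ u (i1 j) - pvec δ (flip u j) (i1 j) = -(2*(s*δ))/k := by
    rw [pvec_i1, pvec_i1, flip_apply, bsign_not, ← hs]; ring
  have habs : |s * δ| = δ := by rw [abs_mul, hs, bsign_abs, one_mul, abs_of_nonneg hδ]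
  rw [e0, e1, abs_div, abs_div, abs_neg, abs_mul, habs, abs_of_nonneg hk'.le, abs_two]
  rw [← add_div]
  apply le_of_eq
  ring

lemma chi_sum (δ : ℝ) (hδ : 0 ≤ δ) (hδ3 : δ ≤ 1/3) (hk : 0 < k)
    (u : Fin (k/2) → Bool) (j : Fin (k/2)) :
    ∑ i, (pvec δ u i)^2 / (pvec δ (flip u j) i) ≤ 1 + 9 * δ^2 / k := by
  have hk' : (0:ℝ) < k := by positivity
  have hδ1 : δ < 1 := by linarith
  have hqpos : ∀ i, 0 < pvec δ (flip u j) i := pvec_pos δ hδ hδ1 hk (flip u j)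
  have hident : ∀ i, (pvec δ u i)^2 / (pvec δ (flip u j) i)
      = pvec δ u i + (pvec δ u i - pvec δ (flip u j) i)
        + (pvec δ u i - pvec δ (flip u j) i)^2 / (pvec δ (flip u j) i) := by
    intro i
    have h0 := (hqpos i).ne'
    field_simp
    ring
  rw [Finset.sum_congr rfl fun i _ => hident i]
  rw [Finset.sum_add_distrib, Finset.sum_add_distrib, sum_pvec δ hk,
    Finset.sum_sub_distrib, sum_pvec δ hk, sum_pvec δ hk]
  have hR : ∑ i, (pvec δ u i - pvec δ (flip u j) i)^2 / (pvec δ (flip u j) i)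
      ≤ 9 * δ^2 / k := by
    rw [sum_support_pair _ j (fun i h0 h1 => by rw [pvec_flip_eq δ u j i h0 h1]; simp)]
    set s := bsign (u j) with hs
    set a := s * δ with ha
    have habs : |a| = δ := by rw [ha, abs_mul, hs, bsign_abs, one_mul, abs_of_nonneg hδ]
    have ha1 : -δ ≤ a := by rw [← habs]; exact neg_abs_le a
    have ha2 : a ≤ δ := by rw [← habs]; exact le_abs_self a
    have hm : 0 < 1 - a := by linarith
    have hp : 0 < 1 + a := by linarith
    have hasq : a^2 ≤ 1/9 := by nlinarith [sq_nonneg a, habs]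
    have e0 : pvec δ u (i0 j) - pvec δ (flip u j) (i0 j) = 2*a/k := by
      rw [pvec_i0, pvec_i0, flip_apply, bsign_not, ← hs, ← ha]; ring
    have e1 : pvec δ u (i1 j) - pvec δ (flip u j) (i1 j) = -(2*a)/k := by
      rw [pvec_i1, pvec_i1, flip_apply, bsign_not, ← hs, ← ha]; ring
    have q0 : pvec δ (flip u j) (i0 j) = (1 - a)/k := by
      rw [pvec_i0, flip_apply, bsign_not, ← hs, ha]; ring
    have q1 : pvec δ (flip u j) (i1 j) = (1 + a)/k := by
      rw [pvec_i1, flip_apply, bsign_not, ← hs, ha]; ring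
    rw [e0, e1, q0, q1]
    have lhs_eq : (2*a/(k:ℝ))^2 / ((1-a)/k) + (-(2*a)/k)^2 / ((1+a)/k)
        = 4*a^2/(k*(1-a)) + 4*a^2/(k*(1+a)) := by
      field_simp
      ring
    rw [lhs_eq]
    rw [div_add_div _ _ (by positivity) (by positivity),
      div_le_div_iff₀ (by positivity) hk']
    have haa : δ^2 = a^2 := by rw [ha, hs]; cases u j <;> simp [bsign] <;> ring
    rw [haa]
    have h1 : 0 ≤ a^2*(k:ℝ)^2*(1 - 9*a^2) :=
      mul_nonneg (mul_nonneg (sq_nonneg a) (sq_nonneg _)) (by linarith)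
    linarith [h1]
  linarith

/-- indicator that the pair test at `j` disagrees with `u j` -/
noncomputable def msmInd (u : Fin (k/2) → Bool) (j : Fin (k/2)) (q : Fin k → ℝ) : ℝ :=
  if u j then (if q (i0 j) < q (i1 j) then 1 else 0)
  else (if q (i1 j) ≤ q (i0 j) then 1 else 0)

lemma msmInd_nonneg (u : Fin (k/2) → Bool) (j : Fin (k/2)) (q : Fin k → ℝ) :
    0 ≤ msmInd u j q := by
  rw [msmInd]; split <;> split <;> norm_num

lemma assouad_pointwise (δ : ℝ) (hδ : 0 ≤ δ) (hk : 0 < k)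
    (u : Fin (k/2) → Bool) (q : Fin k → ℝ) :
    (δ / k) * ∑ j, msmInd u j q ≤ tvVec q (pvec δ u) := by
  have hk' : (0:ℝ) < k := by positivity
  have hpair : ∀ j : Fin (k/2), (2*δ/k) * msmInd u j q
      ≤ |q (i0 j) - pvec δ u (i0 j)| + |q (i1 j) - pvec δ u (i1 j)| := by
    intro j
    rw [msmInd]
    have habs0 := abs_nonneg (q (i0 j) - pvec δ u (i0 j))
    have habs1 := abs_nonneg (q (i1 j) - pvec δ u (i1 j))
    cases hu : u j with
    | true =>
      have p0 : pvec δ u (i0 j) = (1+δ)/k := by rw [pvec_i0, hu]; simp [bsign]; try ring_nf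
      have p1 : pvec δ u (i1 j) = (1-δ)/k := by rw [pvec_i1, hu]; simp [bsign]; try ring_nf
      rw [if_pos rfl]
      split
      · rename_i hq
        have a0 : pvec δ u (i0 j) - q (i0 j) ≤ |q (i0 j) - pvec δ u (i0 j)| := by
          rw [abs_sub_comm]; exact le_abs_self _
        have a1 : q (i1 j) - pvec δ u (i1 j) ≤ |q (i1 j) - pvec δ u (i1 j)| := le_abs_self _
        have hd : pvec δ u (i0 j) - pvec δ u (i1 j) = 2*δ/k := by rw [p0, p1]; ring
        linarith
      · rw [mul_zero]; linarith
    | false =>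
      have p0 : pvec δ u (i0 j) = (1-δ)/k := by
        rw [pvec_i0, hu]; simp [bsign]; try ring_nf
      have p1 : pvec δ u (i1 j) = (1+δ)/k := by
        rw [pvec_i1, hu]; simp [bsign]; try ring_nf
      rw [if_neg (by simp)]
      split
      · rename_i hq
        have a0 : q (i0 j) - pvec δ u (i0 j) ≤ |q (i0 j) - pvec δ u (i0 j)| := le_abs_self _
        have a1 : pvec δ u (i1 j) - q (i1 j) ≤ |q (i1 j) - pvec δ u (i1 j)| := by
          rw [abs_sub_comm]; exact le_abs_self _
        have hd : pvec δ u (i1 j) - pvec δ u (i0 j) = 2*δ/k := by rw [p0, p1]; ring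
        linarith
      · rw [mul_zero]; linarith
  have hsum : ∑ j : Fin (k/2), (2*δ/k) * msmInd u j q
      ≤ ∑ i, |q i - pvec δ u i| := by
    refine le_trans (Finset.sum_le_sum fun j _ => hpair j) ?_
    exact sum_pairs_le (fun i => |q i - pvec δ u i|) (fun i => abs_nonneg _)
  rw [tvVec]
  rw [← Finset.mul_sum] at hsum
  have e : 2 * δ / (k:ℝ) * (∑ j, msmInd u j q) = 2 * (δ / (k:ℝ) * ∑ j, msmInd u j q) := by
    ring
  rw [e] at hsum
  linarith



variable {k n : ℕ}

/-- product weight -/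
noncomputable def W (n : ℕ) (p : Fin k → ℝ) (x : Fin n → Fin k) : ℝ := ∏ i, p (x i)

lemma W_nonneg (p : Fin k → ℝ) (hp : ∀ a, 0 ≤ p a) (x : Fin n → Fin k) : 0 ≤ W n p x :=
  Finset.prod_nonneg fun i _ => hp (x i)

lemma sum_W (p : Fin k → ℝ) (hp1 : ∑ a, p a = 1) : ∑ x : Fin n → Fin k, W n p x = 1 := by
  have h := Finset.prod_univ_sum (fun _ : Fin n => (Finset.univ : Finset (Fin k)))
    (fun _ a => p a)
  rw [Fintype.piFinset_univ] at h
  have : ∑ x : Fin n → Fin k, W n p x = ∏ _i : Fin n, ∑ a, p a := by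
    rw [h]; rfl
  rw [this, hp1]
  simp

lemma discMeasure_apply (p : Fin k → ℝ) (a : Fin k) :
    discMeasure p {a} = ENNReal.ofReal (p a) := by
  rw [discMeasure, Measure.finset_sum_apply]
  have : ∀ i : Fin k, (ENNReal.ofReal (p i) • Measure.dirac i) {a}
      = ENNReal.ofReal (p i) * ({a} : Set (Fin k)).indicator 1 i := by
    intro i
    rw [Measure.smul_apply, smul_eq_mul, Measure.dirac_apply' _ (measurableSet_singleton a)]
  rw [Finset.sum_congr rfl fun i _ => this i]
  rw [Finset.sum_eq_single a]
  · simp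
  · intro b _ hb
    simp [Set.indicator_of_notMem, hb]
  · simp

lemma discMeasure_univ (p : Fin k → ℝ) (hp1 : ∑ a, p a = 1) (hp : ∀ a, 0 ≤ p a) :
    discMeasure p Set.univ = 1 := by
  rw [discMeasure, Measure.finset_sum_apply]
  simp only [Measure.smul_apply, Measure.dirac_apply' _ MeasurableSet.univ, smul_eq_mul]
  simp only [Set.indicator_univ, Pi.one_apply, mul_one]
  rw [← ENNReal.ofReal_sum_of_nonneg fun i _ => hp i, hp1, ENNReal.ofReal_one]

instance (p : Fin k → ℝ) : IsFiniteMeasure (discMeasure p) := by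
  constructor
  rw [discMeasure, Measure.finset_sum_apply]
  refine ENNReal.sum_lt_top.2 fun i _ => ?_
  rw [Measure.smul_apply, smul_eq_mul]
  exact ENNReal.mul_lt_top ENNReal.ofReal_lt_top (measure_lt_top _ _)

lemma isProb_disc (p : Fin k → ℝ) (hp : p ∈ stdSimplex ℝ (Fin k)) :
    IsProbabilityMeasure (discMeasure p) :=
  ⟨discMeasure_univ p hp.2 hp.1⟩

lemma iid_singleton (p : Fin k → ℝ) (hp : ∀ a, 0 ≤ p a) (x : Fin n → Fin k) :
    iidSamples n p {x} = ENNReal.ofReal (W n p x) := by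
  rw [iidSamples, ← Set.univ_pi_singleton, Measure.pi_pi]
  rw [Finset.prod_congr rfl fun i _ => discMeasure_apply p (x i)]
  rw [W, ENNReal.ofReal_prod_of_nonneg fun i _ => hp (x i)]

lemma lintegral_iid (p : Fin k → ℝ) (hp : ∀ a, 0 ≤ p a) (f : (Fin n → Fin k) → ℝ≥0∞) :
    ∫⁻ x, f x ∂(iidSamples n p) = ∑ x, f x * ENNReal.ofReal (W n p x) := by
  rw [lintegral_fintype]
  exact Finset.sum_congr rfl fun x _ => by rw [iid_singleton p hp x]

variable (est : Kernel (Fin n → Fin k) (simplex k))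

/-- expected acceptance of `A` under `p^{⊗n}` composed with `est`, as a real number -/
noncomputable def Sr (p : Fin k → ℝ) (A : Set (simplex k)) : ℝ :=
  ∑ x, W n p x * ((est x) A).toReal

lemma Sr_nonneg (p : Fin k → ℝ) (hp : ∀ a, 0 ≤ p a) (A : Set (simplex k)) :
    0 ≤ Sr est p A :=
  Finset.sum_nonneg fun x _ => mul_nonneg (W_nonneg p hp x) ENNReal.toReal_nonneg

lemma lintegral_est_eq [IsMarkovKernel est] (p : Fin k → ℝ) (hp : ∀ a, 0 ≤ p a)
    (A : Set (simplex k)) :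
    ∫⁻ x, est x A ∂(iidSamples n p) = ENNReal.ofReal (Sr est p A) := by
  rw [lintegral_iid p hp]
  rw [Sr, ENNReal.ofReal_sum_of_nonneg
    fun x _ => mul_nonneg (W_nonneg p hp x) ENNReal.toReal_nonneg]
  refine Finset.sum_congr rfl fun x _ => ?_
  rw [ENNReal.ofReal_mul (W_nonneg p hp x), ENNReal.ofReal_toReal (measure_ne_top _ _)]
  ring

lemma Sr_compl [IsMarkovKernel est] (p : Fin k → ℝ) (hp : p ∈ stdSimplex ℝ (Fin k))
    {A : Set (simplex k)} (hA : MeasurableSet A) :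
    Sr est p Aᶜ = 1 - Sr est p A := by
  have : ∀ x, ((est x) Aᶜ).toReal = 1 - ((est x) A).toReal := by
    intro x
    rw [prob_compl_eq_one_sub hA, ENNReal.toReal_sub_of_le prob_le_one ENNReal.one_ne_top]
    simp
  rw [Sr, Finset.sum_congr rfl fun x _ => by rw [this x]]
  rw [Sr]
  have := sum_W (n := n) p hp.2
  rw [Finset.sum_congr rfl fun x _ => (mul_sub (W n p x) 1 (((est x) A).toReal) :
    W n p x * (1 - ((est x) A).toReal) = _)]
  rw [Finset.sum_sub_distrib]
  simp only [mul_one]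
  rw [this]

/-- acceptance region for the pair test at `j` (test says "first cell bigger") -/
def Aset (j : Fin (k/2)) : Set (simplex k) := {q | q.1 (i1 j) ≤ q.1 (i0 j)}

/-- mismatch region for `u` at `j` -/
def Mset (u : Fin (k/2) → Bool) (j : Fin (k/2)) : Set (simplex k) :=
  if u j then (Aset j)ᶜ else Aset j

lemma measurable_coord (i : Fin k) : Measurable (fun q : simplex k => q.1 i) := by
  have h : Measurable (fun q : {p : Fin k → ℝ // p ∈ stdSimplex ℝ (Fin k)} => q.1 i) :=
    (measurable_pi_apply i).comp measurable_subtype_coe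
  exact h

lemma measurableSet_Aset (j : Fin (k/2)) : MeasurableSet (Aset j) :=
  measurableSet_le (measurable_coord (i1 j)) (measurable_coord (i0 j))

lemma measurableSet_Mset (u : Fin (k/2) → Bool) (j : Fin (k/2)) :
    MeasurableSet (Mset u j) := by
  rw [Mset]; split
  · exact (measurableSet_Aset j).compl
  · exact measurableSet_Aset j

lemma Mset_flip (u : Fin (k/2) → Bool) (j : Fin (k/2)) :
    Mset (flip u j) j = (Mset u j)ᶜ := by
  rw [Mset, Mset, flip_apply]
  cases u j <;> simp

lemma msmInd_of_mem (u : Fin (k/2) → Bool) (j : Fin (k/2)) (q : simplex k)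
    (hq : q ∈ Mset u j) : msmInd u j q.1 = 1 := by
  rw [Mset] at hq
  rw [msmInd]
  cases hu : u j <;> rw [hu] at hq <;> simp only [if_true, if_false, Bool.false_eq_true] at *
  · exact if_pos hq
  · exact if_pos (by simpa [Aset, Set.mem_compl_iff, not_le] using hq)

lemma msmInd_of_not_mem (u : Fin (k/2) → Bool) (j : Fin (k/2)) (q : simplex k)
    (hq : q ∉ Mset u j) : msmInd u j q.1 = 0 := by
  rw [Mset] at hq
  rw [msmInd]
  cases hu : u j <;> rw [hu] at hq <;> simp only [if_true, if_false, Bool.false_eq_true] at *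
  · exact if_neg hq
  · refine if_neg ?_
    simp only [Set.mem_compl_iff, not_not] at hq
    exact not_lt.2 hq

lemma indicator_eq_ofReal_msmInd (c : ℝ) (hc : 0 ≤ c) (u : Fin (k/2) → Bool)
    (j : Fin (k/2)) (q : simplex k) :
    (Mset u j).indicator (fun _ => ENNReal.ofReal c) q
      = ENNReal.ofReal (c * msmInd u j q.1) := by
  by_cases hq : q ∈ Mset u j
  · rw [Set.indicator_of_mem hq, msmInd_of_mem u j q hq, mul_one]
  · rw [Set.indicator_of_notMem hq, msmInd_of_not_mem u j q hq, mul_zero,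
      ENNReal.ofReal_zero]



variable {k n : ℕ}

lemma star (est : Kernel (Fin n → Fin k) (simplex k)) [IsMarkovKernel est]
    (hk : 0 < k) {δ α : ℝ} (hδ0 : 0 ≤ δ) (hδ1 : δ < 1) (hα0 : 0 ≤ α)
    (hprem : ∀ p : simplex k,
      ∫⁻ x, ∫⁻ q, ENNReal.ofReal (tvVec q.1 p.1) ∂(est x) ∂(iidSamples n p.1)
        ≤ ENNReal.ofReal α)
    (u : Fin (k/2) → Bool) :
    (δ/k) * ∑ j, Sr est (pvec δ u) (Mset u j) ≤ α := by
  have hmem := pvec_mem δ hδ0 hδ1 hk u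
  have hc : (0:ℝ) ≤ δ/k := by positivity
  have hnn : ∀ a, 0 ≤ pvec δ u a := hmem.1
  have hpt : ∀ (x : Fin n → Fin k), ∑ j, ENNReal.ofReal (δ/k) * est x (Mset u j)
      ≤ ∫⁻ q, ENNReal.ofReal (tvVec q.1 (pvec δ u)) ∂(est x) := by
    intro x
    have step1 : ∑ j, ENNReal.ofReal (δ/k) * est x (Mset u j)
        = ∫⁻ q, ∑ j, (Mset u j).indicator (fun _ => ENNReal.ofReal (δ/k)) q ∂(est x) := by
      rw [lintegral_finset_sum _ fun j _ =>
        measurable_const.indicator (measurableSet_Mset u j)]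
      exact Finset.sum_congr rfl fun j _ =>
        (lintegral_indicator_const (measurableSet_Mset u j) _).symm
    rw [step1]
    refine lintegral_mono fun q => ?_
    rw [Finset.sum_congr rfl fun j _ => indicator_eq_ofReal_msmInd (δ/k) hc u j q]
    rw [← ENNReal.ofReal_sum_of_nonneg fun j _ => mul_nonneg hc (msmInd_nonneg u j q.1)]
    apply ENNReal.ofReal_le_ofReal
    rw [← Finset.mul_sum]
    exact assouad_pointwise δ hδ0 hk u q.1
  have key : ∑ j, ENNReal.ofReal (δ/k) * ENNReal.ofReal (Sr est (pvec δ u) (Mset u j))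
      ≤ ENNReal.ofReal α := by
    have e1 : ∀ j : Fin (k/2), ENNReal.ofReal (δ/k) * ENNReal.ofReal
        (Sr est (pvec δ u) (Mset u j))
        = ∫⁻ x, ENNReal.ofReal (δ/k) * est x (Mset u j) ∂(iidSamples n (pvec δ u)) := by
      intro j
      rw [lintegral_const_mul _ (est.measurable_coe (measurableSet_Mset u j)),
        lintegral_est_eq est (pvec δ u) hnn]
    rw [Finset.sum_congr rfl fun j _ => e1 j]
    rw [← lintegral_finset_sum _ fun j _ =>
      (est.measurable_coe (measurableSet_Mset u j)).const_mul _]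
    calc ∫⁻ x, ∑ j, ENNReal.ofReal (δ/k) * est x (Mset u j) ∂(iidSamples n (pvec δ u))
        ≤ ∫⁻ x, ∫⁻ q, ENNReal.ofReal (tvVec q.1 (pvec δ u)) ∂(est x)
            ∂(iidSamples n (pvec δ u)) := lintegral_mono hpt
      _ ≤ ENNReal.ofReal α := hprem ⟨pvec δ u, hmem⟩
  have e2 : ∑ j, ENNReal.ofReal (δ/k) * ENNReal.ofReal (Sr est (pvec δ u) (Mset u j))
      = ENNReal.ofReal ((δ/k) * ∑ j, Sr est (pvec δ u) (Mset u j)) := by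
    rw [Finset.mul_sum, ENNReal.ofReal_sum_of_nonneg fun j _ =>
      mul_nonneg hc (Sr_nonneg est (pvec δ u) hnn (Mset u j))]
    exact Finset.sum_congr rfl fun j _ => (ENNReal.ofReal_mul hc).symm
  rw [e2] at key
  exact (ENNReal.ofReal_le_ofReal_iff hα0).1 key

section Ham

variable {𝒳 : Type*}

open Classical in
lemma ham_eq_sum (x y : Fin n → 𝒳) :
    (ham x y : ℕ) = ∑ i, if x i = y i then 0 else 1 := by
  classical
  unfold ham
  rw [Finset.card_filter]
  refine Finset.sum_congr rfl fun i _ => ?_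
  by_cases h : x i = y i <;> simp [h]

open Classical in
lemma ham_comm (x y : Fin n → 𝒳) : ham x y = ham y x := by
  rw [ham_eq_sum, ham_eq_sum]
  refine Finset.sum_congr rfl fun i _ => ?_
  by_cases h : x i = y i <;> simp [h, eq_comm]

lemma ham_cons_same (a : 𝒳) (x y : Fin n → 𝒳) :
    ham (Fin.cons a x) (Fin.cons a y) = ham x y := by
  classical
  rw [ham_eq_sum, ham_eq_sum, Fin.sum_univ_succ, Fin.cons_zero, Fin.cons_zero,
    if_pos rfl, zero_add]
  refine Finset.sum_congr rfl fun i _ => ?_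
  rw [Fin.cons_succ, Fin.cons_succ]

lemma ham_cons_head (a b : 𝒳) (x : Fin n → 𝒳) :
    ham (Fin.cons a x) (Fin.cons b x) ≤ 1 := by
  classical
  rw [ham_eq_sum, Fin.sum_univ_succ]
  have h1 : (∑ i : Fin n, if (Fin.cons a x : Fin (n+1) → 𝒳) i.succ
      = (Fin.cons b x : Fin (n+1) → 𝒳) i.succ then 0 else 1) = 0 := by
    refine Finset.sum_eq_zero fun i _ => ?_
    rw [Fin.cons_succ, Fin.cons_succ, if_pos rfl]
  rw [h1, add_zero]
  split <;> simp

end Ham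

/-- hybrid argument: product measures of close distributions give close integrals of
Hamming-Lipschitz functions -/
lemma lip_diff_le (a₀ : Fin k) (L : ℝ) (hL : 0 ≤ L) :
    ∀ (n : ℕ) (G : (Fin n → Fin k) → ℝ),
    (∀ x y : Fin n → Fin k, ham x y ≤ 1 → |G x - G y| ≤ L) →
    ∀ (p q : Fin k → ℝ), (∀ a, 0 ≤ p a) → (∀ a, 0 ≤ q a) →
      (∑ a, p a = 1) → (∑ a, q a = 1) →
    |∑ x, (W n p x - W n q x) * G x| ≤ n * L * ∑ a, |p a - q a| := by
  intro n
  induction n with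
  | zero =>
    intro G hG p q hp hq hp1 hq1
    have hW : ∀ (r : Fin k → ℝ) (x : Fin 0 → Fin k), W 0 r x = 1 := by
      intro r x; rw [W]; simp
    simp [hW]
  | succ m ih =>
    intro G hG p q hp hq hp1 hq1
    have hWcons : ∀ (r : Fin k → ℝ) (a : Fin k) (y : Fin m → Fin k),
        W (m+1) r (Fin.cons a y) = r a * W m r y := by
      intro r a y
      rw [W, W, Fin.prod_univ_succ]
      simp [Fin.cons_succ]
    have hsum : ∀ (F : (Fin (m+1) → Fin k) → ℝ),
        ∑ x, F x = ∑ a : Fin k, ∑ y : Fin m → Fin k, F (Fin.cons a y) := by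
      intro F
      rw [← (Fin.consEquiv (fun _ : Fin (m+1) => Fin k)).sum_comp F, Fintype.sum_prod_type]
      rfl
    set h : Fin k → ℝ := fun a => ∑ y, W m q y * G (Fin.cons a y) with hh
    have split : ∑ x, (W (m+1) p x - W (m+1) q x) * G x
        = (∑ a : Fin k, p a * ∑ y, (W m p y - W m q y) * G (Fin.cons a y))
          + ∑ a : Fin k, (p a - q a) * h a := by
      rw [hsum (fun x => (W (m+1) p x - W (m+1) q x) * G x), ← Finset.sum_add_distrib]
      refine Finset.sum_congr rfl fun a _ => ?_
      have e : ∀ y : Fin m → Fin k,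
          (W (m+1) p (Fin.cons a y) - W (m+1) q (Fin.cons a y)) * G (Fin.cons a y)
          = p a * ((W m p y - W m q y) * G (Fin.cons a y))
            + (p a - q a) * (W m q y * G (Fin.cons a y)) := by
        intro y; rw [hWcons, hWcons]; ring
      rw [Finset.sum_congr rfl fun y _ => e y, Finset.sum_add_distrib,
        ← Finset.mul_sum, ← Finset.mul_sum]
      try rfl
    have hterm1 : |∑ a : Fin k, p a * ∑ y, (W m p y - W m q y) * G (Fin.cons a y)|
        ≤ m * L * ∑ a, |p a - q a| := by
      refine le_trans (Finset.abs_sum_le_sum_abs _ _) ?_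
      have hb : ∀ a : Fin k, |p a * ∑ y, (W m p y - W m q y) * G (Fin.cons a y)|
          ≤ p a * (m * L * ∑ b, |p b - q b|) := by
        intro a
        rw [abs_mul, abs_of_nonneg (hp a)]
        refine mul_le_mul_of_nonneg_left ?_ (hp a)
        exact ih (fun y => G (Fin.cons a y))
          (fun x y hxy => hG _ _ (by rw [ham_cons_same]; exact hxy)) p q hp hq hp1 hq1
      refine le_trans (Finset.sum_le_sum fun a _ => hb a) ?_
      rw [← Finset.sum_mul, hp1, one_mul]
    have hdiff : ∀ a b : Fin k, |h a - h b| ≤ L := by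
      intro a b
      have e : h a - h b = ∑ y, W m q y * (G (Fin.cons a y) - G (Fin.cons b y)) := by
        rw [hh]
        simp only
        rw [← Finset.sum_sub_distrib]
        exact Finset.sum_congr rfl fun y _ => (mul_sub _ _ _).symm
      rw [e]
      refine le_trans (Finset.abs_sum_le_sum_abs _ _) ?_
      have hb : ∀ y : Fin m → Fin k, |W m q y * (G (Fin.cons a y) - G (Fin.cons b y))|
          ≤ W m q y * L := by
        intro y
        rw [abs_mul, abs_of_nonneg (W_nonneg q hq y)]
        exact mul_le_mul_of_nonneg_left (hG _ _ (ham_cons_head a b y)) (W_nonneg q hq y)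
      refine le_trans (Finset.sum_le_sum fun y _ => hb y) ?_
      rw [← Finset.sum_mul, sum_W q hq1, one_mul]
    have hterm2 : |∑ a : Fin k, (p a - q a) * h a| ≤ L * ∑ a, |p a - q a| := by
      have hz : ∑ a, (p a - q a) = 0 := by
        rw [Finset.sum_sub_distrib, hp1, hq1]; ring
      have e : ∑ a : Fin k, (p a - q a) * h a
          = ∑ a : Fin k, (p a - q a) * (h a - h a₀) := by
        rw [Finset.sum_congr rfl fun a _ => mul_sub (p a - q a) (h a) (h a₀),
          Finset.sum_sub_distrib, ← Finset.sum_mul, hz, zero_mul, sub_zero]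
      rw [e]
      refine le_trans (Finset.abs_sum_le_sum_abs _ _) ?_
      have hb2 : ∀ a : Fin k, |(p a - q a) * (h a - h a₀)| ≤ |p a - q a| * L := by
        intro a
        rw [abs_mul]
        exact mul_le_mul_of_nonneg_left (hdiff a a₀) (abs_nonneg _)
      refine le_trans (Finset.sum_le_sum fun a _ => hb2 a) ?_
      rw [← Finset.sum_mul]
      exact le_of_eq (mul_comm _ _)
    rw [split]
    refine le_trans (abs_add_le _ _) ?_
    refine le_trans (add_le_add hterm1 hterm2) ?_
    have hT : 0 ≤ ∑ a, |p a - q a| := Finset.sum_nonneg fun a _ => abs_nonneg _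
    push_cast
    nlinarith [mul_nonneg hL hT]



variable {k n : ℕ}

lemma toReal_prob_le_one {μ : Measure (simplex k)} [IsProbabilityMeasure μ]
    (A : Set (simplex k)) : (μ A).toReal ≤ 1 := by
  have h := prob_le_one (μ := μ) (s := A)
  have := ENNReal.toReal_mono ENNReal.one_ne_top h
  simpa using this

lemma est_lip (est : Kernel (Fin n → Fin k) (simplex k)) [IsMarkovKernel est]
    {ε : ℝ} (hdp : IsDP est ε 0) (hε : 0 ≤ ε) {A : Set (simplex k)}
    (hA : MeasurableSet A) :
    ∀ x y : Fin n → Fin k, ham x y ≤ 1 →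
      |((est x) A).toReal - ((est y) A).toReal| ≤ Real.exp ε - 1 := by
  have key : ∀ x y : Fin n → Fin k, ham x y ≤ 1 →
      ((est x) A).toReal - ((est y) A).toReal ≤ Real.exp ε - 1 := by
    intro x y hxy
    have h := hdp x y hxy A hA
    rw [ENNReal.ofReal_zero, add_zero] at h
    have hfin : ENNReal.ofReal (Real.exp ε) * (est y) A ≠ ⊤ :=
      ENNReal.mul_ne_top ENNReal.ofReal_ne_top (measure_ne_top _ _)
    have h2 : ((est x) A).toReal ≤ Real.exp ε * ((est y) A).toReal := by
      have h3 := ENNReal.toReal_mono hfin h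
      rwa [ENNReal.toReal_mul, ENNReal.toReal_ofReal (Real.exp_pos ε).le] at h3
    have h4 : ((est y) A).toReal ≤ 1 := toReal_prob_le_one A
    have h5 : (0:ℝ) ≤ ((est y) A).toReal := ENNReal.toReal_nonneg
    have h6 : 1 ≤ Real.exp ε := Real.one_le_exp hε
    nlinarith
  intro x y hxy
  rw [abs_sub_le_iff]
  exact ⟨key x y hxy, key y x (by rwa [ham_comm])⟩

lemma Sr_sub (est : Kernel (Fin n → Fin k) (simplex k)) (p q : Fin k → ℝ)
    (A : Set (simplex k)) :
    Sr est p A - Sr est q A = ∑ x, (W n p x - W n q x) * ((est x) A).toReal := by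
  rw [Sr, Sr, ← Finset.sum_sub_distrib]
  exact Finset.sum_congr rfl fun x _ => by ring

/-- DP bound on the difference of acceptance probabilities -/
lemma dp_diff_le (est : Kernel (Fin n → Fin k) (simplex k)) [IsMarkovKernel est]
    (hk : 0 < k) {ε : ℝ} (hdp : IsDP est ε 0) (hε : 0 ≤ ε) {A : Set (simplex k)}
    (hA : MeasurableSet A) (p q : Fin k → ℝ) (hp : ∀ a, 0 ≤ p a) (hq : ∀ a, 0 ≤ q a)
    (hp1 : ∑ a, p a = 1) (hq1 : ∑ a, q a = 1) :
    |Sr est p A - Sr est q A| ≤ n * (Real.exp ε - 1) * ∑ a, |p a - q a| := by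
  rw [Sr_sub]
  exact lip_diff_le ⟨0, hk⟩ (Real.exp ε - 1)
    (by linarith [Real.one_le_exp hε]) n (fun x => ((est x) A).toReal)
    (est_lip est hdp hε hA) p q hp hq hp1 hq1

lemma sum_prod_eq_pow (f : Fin k → ℝ) :
    ∑ x : Fin n → Fin k, (∏ i, f (x i)) = (∑ a, f a)^n := by
  have h := Finset.prod_univ_sum (fun _ : Fin n => (Finset.univ : Finset (Fin k)))
    (fun _ a => f a)
  rw [Fintype.piFinset_univ] at h
  rw [← h, Finset.prod_const, Finset.card_univ, Fintype.card_fin]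

/-- TV-type bound on difference of acceptance probabilities -/
lemma diff_le_half_sum (est : Kernel (Fin n → Fin k) (simplex k)) [IsMarkovKernel est]
    (p q : Fin k → ℝ) (A : Set (simplex k)) :
    |Sr est p A - Sr est q A| ≤ (1/2) * ∑ x, |W n p x - W n q x|
      + (1/2) * |∑ x, (W n p x - W n q x)| := by
  rw [Sr_sub]
  have e : ∀ x : Fin n → Fin k, (W n p x - W n q x) * ((est x) A).toReal
      = (W n p x - W n q x) * (((est x) A).toReal - 1/2)
        + (1/2) * (W n p x - W n q x) := by
    intro x; ring
  rw [Finset.sum_congr rfl fun x _ => e x, Finset.sum_add_distrib]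
  refine le_trans (abs_add_le _ _) ?_
  have h1 : |∑ x, (W n p x - W n q x) * (((est x) A).toReal - 1/2)|
      ≤ (1/2) * ∑ x, |W n p x - W n q x| := by
    refine le_trans (Finset.abs_sum_le_sum_abs _ _) ?_
    have hb : ∀ x : Fin n → Fin k, |(W n p x - W n q x) * (((est x) A).toReal - 1/2)|
        ≤ |W n p x - W n q x| * (1/2) := by
      intro x
      rw [abs_mul]
      refine mul_le_mul_of_nonneg_left ?_ (abs_nonneg _)
      rw [abs_le]
      constructor
      · have := ENNReal.toReal_nonneg (a := (est x) A); linarith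
      · have := toReal_prob_le_one (μ := est x) A; linarith
    refine le_trans (Finset.sum_le_sum fun x _ => hb x) ?_
    rw [← Finset.sum_mul]
    exact le_of_eq (mul_comm _ _)
  have h2 : |(∑ x, (1/2) * (W n p x - W n q x))| = (1/2) * |∑ x, (W n p x - W n q x)| := by
    rw [← Finset.mul_sum, abs_mul]
    norm_num
  rw [h2]
  linarith

lemma cs_bound (p q : Fin k → ℝ) (hq : ∀ a, 0 < q a) (hp1 : ∑ a, p a = 1)
    (hq1 : ∑ a, q a = 1) :
    ∑ x : Fin n → Fin k, |W n p x - W n q x|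
      ≤ Real.sqrt ((∑ a, (p a)^2/(q a))^n - 1) := by
  have hWq : ∀ x : Fin n → Fin k, 0 < W n q x :=
    fun x => Finset.prod_pos fun i _ => hq (x i)
  have cs := Finset.sum_mul_sq_le_sq_mul_sq Finset.univ
    (fun x : Fin n → Fin k => |W n p x - W n q x| / Real.sqrt (W n q x))
    (fun x => Real.sqrt (W n q x))
  have e1 : ∀ x : Fin n → Fin k,
      |W n p x - W n q x| / Real.sqrt (W n q x) * Real.sqrt (W n q x)
      = |W n p x - W n q x| :=
    fun x => div_mul_cancel₀ _ (Real.sqrt_pos.2 (hWq x)).ne'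
  have e2 : ∀ x : Fin n → Fin k,
      (|W n p x - W n q x| / Real.sqrt (W n q x))^2
      = (W n p x - W n q x)^2 / W n q x := by
    intro x
    rw [div_pow, sq_abs, Real.sq_sqrt (hWq x).le]
  have e3 : ∀ x : Fin n → Fin k, (Real.sqrt (W n q x))^2 = W n q x :=
    fun x => Real.sq_sqrt (hWq x).le
  rw [Finset.sum_congr rfl fun x _ => e1 x, Finset.sum_congr rfl fun x _ => e2 x,
    Finset.sum_congr rfl fun x _ => e3 x, sum_W q hq1, mul_one] at cs
  have hkey : ∑ x : Fin n → Fin k, (W n p x - W n q x)^2 / W n q x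
      = (∑ a, (p a)^2/(q a))^n - 1 := by
    have ident : ∀ x : Fin n → Fin k, (W n p x - W n q x)^2 / W n q x
        = (W n p x)^2/(W n q x) - 2 * W n p x + W n q x := by
      intro x
      have hne := (hWq x).ne'
      field_simp
      ring
    rw [Finset.sum_congr rfl fun x _ => ident x, Finset.sum_add_distrib,
      Finset.sum_sub_distrib, ← Finset.mul_sum, sum_W p hp1, sum_W q hq1]
    have hA : ∑ x : Fin n → Fin k, (W n p x)^2/(W n q x)
        = (∑ a, (p a)^2/(q a))^n := by
      have ptw : ∀ x : Fin n → Fin k, (W n p x)^2/(W n q x)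
          = ∏ i, (p (x i))^2 / (q (x i)) := by
        intro x
        rw [W, W, ← Finset.prod_pow, ← Finset.prod_div_distrib]
      rw [Finset.sum_congr rfl fun x _ => ptw x]
      exact sum_prod_eq_pow (fun a => (p a)^2 / q a)
    rw [hA]
    ring
  rw [hkey] at cs
  have h0 : 0 ≤ ∑ x : Fin n → Fin k, |W n p x - W n q x| :=
    Finset.sum_nonneg fun x _ => abs_nonneg _
  have hy : (0:ℝ) ≤ (∑ a, (p a)^2/(q a))^n - 1 :=
    le_trans (sq_nonneg _) cs
  exact (Real.le_sqrt h0 hy).2 cs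

lemma exp_fifth : Real.exp (1/5 : ℝ) ≤ 5/4 := by
  have h := Real.add_one_le_exp (-(1/5) : ℝ)
  rw [Real.exp_neg] at h
  have hpos := Real.exp_pos (1/5 : ℝ)
  have h2 : (4/5 : ℝ) * Real.exp (1/5) ≤ 1 := by
    have := mul_le_mul_of_nonneg_right h hpos.le
    rwa [inv_mul_cancel₀ hpos.ne', show (-(1/5 : ℝ) + 1) = 4/5 by norm_num] at this
  linarith

lemma exp_sub_one_le (ε : ℝ) (hε0 : 0 ≤ ε) (hε2 : ε ≤ 1/2) :
    Real.exp ε - 1 ≤ 2 * ε := by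
  have h := Real.add_one_le_exp (-ε)
  rw [Real.exp_neg] at h
  have hpos := Real.exp_pos ε
  have h2 : (1 - ε) * Real.exp ε ≤ 1 := by
    have := mul_le_mul_of_nonneg_right h hpos.le
    rwa [inv_mul_cancel₀ hpos.ne', show (-ε + 1) = 1 - ε by ring] at this
  nlinarith

lemma one_add_pow_le_exp (t : ℝ) (ht : 0 ≤ t) (n : ℕ) :
    (1 + t)^n ≤ Real.exp (n * t) := by
  have h1 : (1 + t) ≤ Real.exp t := by
    have := Real.add_one_le_exp t
    linarith
  calc (1 + t)^n ≤ (Real.exp t)^n := pow_le_pow_left₀ (by linarith) h1 n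
    _ = Real.exp (n * t) := by rw [← Real.exp_nat_mul]



variable {k n : ℕ}

lemma averaging (est : Kernel (Fin n → Fin k) (simplex k)) [IsMarkovKernel est]
    (hk : 0 < k) {δ α D : ℝ} (hδ0 : 0 < δ) (hδ1 : δ < 1) (hα0 : 0 ≤ α)
    (hprem : ∀ p : simplex k,
      ∫⁻ x, ∫⁻ q, ENNReal.ofReal (tvVec q.1 p.1) ∂(est x) ∂(iidSamples n p.1)
        ≤ ENNReal.ofReal α)
    (hD : ∀ (u : Fin (k/2) → Bool) (j : Fin (k/2)),
      |Sr est (pvec δ u) (Mset u j) - Sr est (pvec δ (flip u j)) (Mset u j)| ≤ D) :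
    ((k/2 : ℕ) : ℝ) * (1 - D) ≤ 2 * (α * k / δ) := by
  set C : ℝ := (Fintype.card (Fin (k/2) → Bool) : ℝ) with hCdef
  have hC : (0:ℝ) < C := by
    rw [hCdef]
    exact_mod_cast Fintype.card_pos
  have hstar : ∀ u : Fin (k/2) → Bool,
      ∑ j, Sr est (pvec δ u) (Mset u j) ≤ α * k / δ := by
    intro u
    have h := star est hk hδ0.le hδ1 hα0 hprem u
    have hpos : (0:ℝ) < δ/(k:ℝ) := by positivity
    rw [show α * (k:ℝ) / δ = α / (δ / k) by field_simp]
    rw [le_div_iff₀ hpos, mul_comm]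
    exact h
  have hpair : ∀ (j : Fin (k/2)) (u : Fin (k/2) → Bool),
      1 - D ≤ Sr est (pvec δ u) (Mset u j)
        + Sr est (pvec δ (flip u j)) (Mset (flip u j) j) := by
    intro j u
    rw [Mset_flip u j, Sr_compl est (pvec δ (flip u j))
      (pvec_mem δ hδ0.le hδ1 hk (flip u j)) (measurableSet_Mset u j)]
    have habs := abs_le.1 (hD u j)
    linarith [habs.1]
  have hsumj : ∀ j : Fin (k/2), C * (1 - D)
      ≤ 2 * ∑ u : Fin (k/2) → Bool, Sr est (pvec δ u) (Mset u j) := by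
    intro j
    have hinv : Function.Involutive (fun u : Fin (k/2) → Bool => flip u j) :=
      fun u => flip_flip u j
    have hre : ∑ u : Fin (k/2) → Bool, Sr est (pvec δ (flip u j)) (Mset (flip u j) j)
        = ∑ u : Fin (k/2) → Bool, Sr est (pvec δ u) (Mset u j) :=
      Equiv.sum_comp hinv.toPerm (fun u => Sr est (pvec δ u) (Mset u j))
    have hsum2 : ∑ u : Fin (k/2) → Bool, (Sr est (pvec δ u) (Mset u j)
        + Sr est (pvec δ (flip u j)) (Mset (flip u j) j))
        = 2 * ∑ u : Fin (k/2) → Bool, Sr est (pvec δ u) (Mset u j) := by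
      rw [Finset.sum_add_distrib, hre]; ring
    calc C * (1 - D) = ∑ _u : Fin (k/2) → Bool, (1 - D) := by
          rw [Finset.sum_const, Finset.card_univ, nsmul_eq_mul]
      _ ≤ ∑ u : Fin (k/2) → Bool, (Sr est (pvec δ u) (Mset u j)
            + Sr est (pvec δ (flip u j)) (Mset (flip u j) j)) :=
          Finset.sum_le_sum fun u _ => hpair j u
      _ = _ := hsum2
  have htot : ((k/2 : ℕ) : ℝ) * (C * (1 - D))
      ≤ 2 * ∑ j : Fin (k/2), ∑ u : Fin (k/2) → Bool, Sr est (pvec δ u) (Mset u j) := by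
    calc ((k/2 : ℕ) : ℝ) * (C * (1 - D)) = ∑ _j : Fin (k/2), C * (1 - D) := by
          rw [Finset.sum_const, Finset.card_univ, Fintype.card_fin, nsmul_eq_mul]
      _ ≤ ∑ j : Fin (k/2), 2 * ∑ u : Fin (k/2) → Bool, Sr est (pvec δ u) (Mset u j) :=
          Finset.sum_le_sum fun j _ => hsumj j
      _ = _ := by rw [Finset.mul_sum]
  have hub : ∑ j : Fin (k/2), ∑ u : Fin (k/2) → Bool, Sr est (pvec δ u) (Mset u j)
      ≤ C * (α * k / δ) := by
    rw [Finset.sum_comm]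
    calc ∑ u : Fin (k/2) → Bool, ∑ j, Sr est (pvec δ u) (Mset u j)
        ≤ ∑ _u : Fin (k/2) → Bool, (α * k / δ) := Finset.sum_le_sum fun u _ => hstar u
      _ = C * (α * k / δ) := by rw [Finset.sum_const, Finset.card_univ, nsmul_eq_mul]
  have hcomb : ((k/2 : ℕ) : ℝ) * (C * (1 - D)) ≤ 2 * (C * (α * k / δ)) := by
    refine le_trans htot ?_
    linarith
  have e1 : ((k/2 : ℕ) : ℝ) * (C * (1 - D)) = (((k/2 : ℕ) : ℝ) * (1 - D)) * C := by ring
  have e2 : 2 * (C * (α * k / δ)) = (2 * (α * k / δ)) * C := by ring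
  rw [e1, e2] at hcomb
  exact le_of_mul_le_mul_right hcomb hC

lemma no_half (est : Kernel (Fin n → Fin k) (simplex k)) [IsMarkovKernel est]
    (hk : 40 ≤ k) {α δ : ℝ} (hα : 0 < α) (hαlt : α < 1/48) (hδ : δ = 9*α)
    (hprem : ∀ p : simplex k,
      ∫⁻ x, ∫⁻ q, ENNReal.ofReal (tvVec q.1 p.1) ∂(est x) ∂(iidSamples n p.1)
        ≤ ENNReal.ofReal α)
    (hD : ∀ (u : Fin (k/2) → Bool) (j : Fin (k/2)),
      |Sr est (pvec δ u) (Mset u j) - Sr est (pvec δ (flip u j)) (Mset u j)| ≤ 1/2) :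
    False := by
  have hk0 : 0 < k := by omega
  have hδ0 : 0 < δ := by rw [hδ]; positivity
  have hδ1 : δ < 1 := by rw [hδ]; linarith
  have h := averaging est hk0 hδ0 hδ1 hα.le hprem hD
  have hm : ((k:ℝ) - 1) / 2 ≤ ((k/2 : ℕ) : ℝ) := by
    have h2 : k ≤ 2 * (k/2) + 1 := by omega
    have h3 : (k:ℝ) ≤ 2 * ((k/2 : ℕ) : ℝ) + 1 := by exact_mod_cast h2
    linarith
  have hαk : α * (k:ℝ) / δ = (k:ℝ) / 9 := by
    rw [hδ]
    field_simp
  rw [hαk] at h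
  have hk40 : (40:ℝ) ≤ (k:ℝ) := by exact_mod_cast hk
  -- h : m * (1 - 1/2) ≤ 2 * (k/9), m ≥ (k-1)/2  ⇒ (k-1)/4 ≤ 2k/9 ⇒ 9k - 9 ≤ 8k ⇒ k ≤ 9
  nlinarith


variable {k n : ℕ}

lemma stat_small (est : Kernel (Fin n → Fin k) (simplex k)) [IsMarkovKernel est]
    (hk : 40 ≤ k) {α δ : ℝ} (hα : 0 < α) (hαlt : α < 1/48) (hδ : δ = 9*α)
    (hprem : ∀ p : simplex k,
      ∫⁻ x, ∫⁻ q, ENNReal.ofReal (tvVec q.1 p.1) ∂(est x) ∂(iidSamples n p.1)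
        ≤ ENNReal.ofReal α)
    (hsmall : 9*(n:ℝ)*δ^2 ≤ (k:ℝ)/5) : False := by
  refine no_half est hk hα hαlt hδ hprem ?_
  intro u j
  have hk0 : 0 < k := by omega
  have hkR : (0:ℝ) < (k:ℝ) := by positivity
  have hδ0 : 0 ≤ δ := by rw [hδ]; positivity
  have hδ1 : δ < 1 := by rw [hδ]; linarith
  have hδ3 : δ ≤ 1/3 := by rw [hδ]; linarith
  have hpmem := pvec_mem δ hδ0 hδ1 hk0 u
  have hfmem := pvec_mem δ hδ0 hδ1 hk0 (flip u j)
  have h1 := diff_le_half_sum est (pvec δ u) (pvec δ (flip u j)) (Mset u j)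
  have hz : ∑ x : Fin n → Fin k, (W n (pvec δ u) x - W n (pvec δ (flip u j)) x) = 0 := by
    rw [Finset.sum_sub_distrib, sum_W _ hpmem.2, sum_W _ hfmem.2]
    ring
  rw [hz, abs_zero, mul_zero, add_zero] at h1
  have h2 := cs_bound (n := n) (pvec δ u) (pvec δ (flip u j))
    (pvec_pos δ hδ0 hδ1 hk0 (flip u j)) hpmem.2 hfmem.2
  have h3 := chi_sum δ hδ0 hδ3 hk0 u j
  have hS0 : 0 ≤ ∑ a, (pvec δ u a)^2 / (pvec δ (flip u j) a) :=
    Finset.sum_nonneg fun a _ =>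
      div_nonneg (sq_nonneg _) (pvec_pos δ hδ0 hδ1 hk0 (flip u j) a).le
  have h4 : (∑ a, (pvec δ u a)^2/(pvec δ (flip u j) a))^n ≤ (1 + 9*δ^2/(k:ℝ))^n :=
    pow_le_pow_left₀ hS0 h3 n
  have h5 := one_add_pow_le_exp (9*δ^2/(k:ℝ)) (by positivity) n
  have h6 : (n:ℝ) * (9*δ^2/(k:ℝ)) ≤ 1/5 := by
    have e : (n:ℝ) * (9*δ^2/(k:ℝ)) = (9*(n:ℝ)*δ^2)/(k:ℝ) := by ring
    rw [e]
    rw [div_le_iff₀ hkR]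
    calc 9*(n:ℝ)*δ^2 ≤ (k:ℝ)/5 := hsmall
      _ = 1/5 * (k:ℝ) := by ring
  have h7 : Real.exp ((n:ℝ)*(9*δ^2/(k:ℝ))) ≤ 5/4 :=
    le_trans (Real.exp_le_exp.2 h6) exp_fifth
  have h8 : (∑ a, (pvec δ u a)^2/(pvec δ (flip u j) a))^n - 1 ≤ 1/4 := by linarith
  have h9 : Real.sqrt ((∑ a, (pvec δ u a)^2/(pvec δ (flip u j) a))^n - 1) ≤ 1/2 := by
    refine le_trans (Real.sqrt_le_sqrt h8) ?_
    rw [show (1/4:ℝ) = (1/2)^2 by norm_num, Real.sqrt_sq (by norm_num)]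
  have h10 : ∑ x : Fin n → Fin k, |W n (pvec δ u) x - W n (pvec δ (flip u j)) x| ≤ 1/2 :=
    le_trans h2 h9
  linarith

lemma dp_small (est : Kernel (Fin n → Fin k) (simplex k)) [IsMarkovKernel est]
    (hk : 40 ≤ k) {α δ ε : ℝ} (hα : 0 < α) (hαlt : α < 1/48) (hδ : δ = 9*α)
    (hε0 : 0 < ε) (hε2 : ε ≤ 1/2) (hdp : IsDP est ε 0)
    (hprem : ∀ p : simplex k,
      ∫⁻ x, ∫⁻ q, ENNReal.ofReal (tvVec q.1 p.1) ∂(est x) ∂(iidSamples n p.1)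
        ≤ ENNReal.ofReal α)
    (hsmall : 8*(n:ℝ)*ε*δ ≤ (k:ℝ)/2) : False := by
  refine no_half est hk hα hαlt hδ hprem ?_
  intro u j
  have hk0 : 0 < k := by omega
  have hkR : (0:ℝ) < (k:ℝ) := by positivity
  have hδ0 : 0 ≤ δ := by rw [hδ]; positivity
  have hδ1 : δ < 1 := by rw [hδ]; linarith
  have hpmem := pvec_mem δ hδ0 hδ1 hk0 u
  have hfmem := pvec_mem δ hδ0 hδ1 hk0 (flip u j)
  have h1 := dp_diff_le est hk0 hdp hε0.le (measurableSet_Mset u j)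
    (pvec δ u) (pvec δ (flip u j)) hpmem.1 hfmem.1 hpmem.2 hfmem.2
  have h2 := tv_sum δ hδ0 hk0 u j
  have h3 : Real.exp ε - 1 ≤ 2*ε := exp_sub_one_le ε hε0.le hε2
  have hL0 : 0 ≤ Real.exp ε - 1 := by linarith [Real.one_le_exp hε0.le]
  have hT0 : 0 ≤ ∑ a, |pvec δ u a - pvec δ (flip u j) a| :=
    Finset.sum_nonneg fun a _ => abs_nonneg _
  have h4 : (n:ℝ) * (Real.exp ε - 1) * ∑ a, |pvec δ u a - pvec δ (flip u j) a|
      ≤ (n:ℝ) * (2*ε) * (4*δ/(k:ℝ)) := by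
    have hn0 : (0:ℝ) ≤ (n:ℝ) := Nat.cast_nonneg n
    have step1 : (n:ℝ) * (Real.exp ε - 1) ≤ (n:ℝ) * (2*ε) :=
      mul_le_mul_of_nonneg_left h3 hn0
    have step0 : 0 ≤ (n:ℝ) * (Real.exp ε - 1) := mul_nonneg hn0 hL0
    exact mul_le_mul step1 h2 hT0 (by positivity)
  have h5 : (n:ℝ) * (2*ε) * (4*δ/(k:ℝ)) ≤ 1/2 := by
    have e : (n:ℝ) * (2*ε) * (4*δ/(k:ℝ)) = (8*(n:ℝ)*ε*δ)/(k:ℝ) := by ring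
    rw [e, div_le_iff₀ hkR]
    calc 8*(n:ℝ)*ε*δ ≤ (k:ℝ)/2 := hsmall
      _ = 1/2 * (k:ℝ) := by ring
  linarith

end KLB

open KLB in
/-- Sample complexity lower bound for `ε`-DP `k`-ary distribution estimation under total
variation distance: there is a universal constant `c > 0` such that any `ε`-DP estimator
achieving expected TV error at most `α` on every `p ∈ Δ_k` requires
`n ≥ c (k/α² + k/(αε))` samples. -/
theorem kary_tv_pure_dp_lower_bound :
    ∃ c : ℝ, 0 < c ∧
      ∀ (k : ℕ), 40 ≤ k → ∀ α : ℝ, 0 < α → α < 1 / 48 → ∀ ε : ℝ, 0 < ε → ∀ n : ℕ,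
        ∀ est : Kernel (Fin n → Fin k) (simplex k), IsMarkovKernel est → IsDP est ε 0 →
          (∀ p : simplex k,
            ∫⁻ x, ∫⁻ q, ENNReal.ofReal (tvVec q.1 p.1) ∂(est x) ∂(iidSamples n p.1)
              ≤ ENNReal.ofReal α) →
          c * (k / α ^ 2 + k / (α * ε)) ≤ n := by
  refine ⟨1/12000, by norm_num, ?_⟩
  intro k hk α hα hαlt ε hε n est hMarkov hdp hprem
  haveI := hMarkov
  have hk0 : 0 < k := by omega
  have hkR : (0:ℝ) < (k:ℝ) := by positivity
  have hnR : (0:ℝ) ≤ (n:ℝ) := Nat.cast_nonneg n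
  have hstat : (k:ℝ)/5 < 9*(n:ℝ)*(9*α)^2 := by
    by_contra hcon
    push_neg at hcon
    exact stat_small est hk hα hαlt rfl hprem hcon
  have hA : (k:ℝ)/α^2 ≤ 3645 * n := by
    rw [div_le_iff₀ (by positivity)]
    nlinarith
  by_cases hε2 : ε ≤ 1/2
  · have hdpb : (k:ℝ)/2 < 8*(n:ℝ)*ε*(9*α) := by
      by_contra hcon
      push_neg at hcon
      exact dp_small est hk hα hαlt rfl hε hε2 hdp hprem hcon
    have hB : (k:ℝ)/(α*ε) ≤ 144 * n := by
      rw [div_le_iff₀ (by positivity)]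
      nlinarith
    linarith
  · push_neg at hε2
    have hB : (k:ℝ)/(α*ε) ≤ (2*(k:ℝ))/α^2 := by
      rw [div_le_div_iff₀ (by positivity) (by positivity)]
      nlinarith [mul_le_mul_of_nonneg_left (show α ≤ 2*ε by linarith)
        (mul_nonneg hkR.le hα.le)]
    have hB2 : (2*(k:ℝ))/α^2 = 2*((k:ℝ)/α^2) := by ring
    rw [hB2] at hB
    linarith
end
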